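/- arXiv:1208.5872 — 8 statements merged into one kernel-verified Lean document; each statement's English description precedes it below -/
import Mathlib

section
/- (Non-stabilizability of the critical push-pull network, hitting-time form.) For any non-idling policy 𝒫, any realization (X_n) of the induced Markov chain started at a state x, and any state y with λ1·x(1) − λ2·x(2) ≠ λ1·y(1) − λ2·y(2), the hitting time T_y = inf{n ≥ 0 : X_n = y} has infinite expectation: E[T_y] = ∞. -/
open MeasureTheory
open scoped ENNReal

/-- State space of the push-pull network: pairs of queue lengths `(x₁, x₂) ∈ ℤ₊²`. -/
abbrev PPState : Type := ℕ × ℕ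

/-- An action of the two servers: `true` means push, `false` means pull. -/
abbrev PPAction : Type := Bool × Bool

/-- A non-idling policy: at `(x, 0)` server 1 must push, at `(0, x)` server 2 must push. -/
def NonIdling (P : PPState → PPAction) : Prop :=
  (∀ x : ℕ, (P (x, 0)).1 = true) ∧ (∀ x : ℕ, (P (0, x)).2 = true)

/-- Transition probabilities of the chain induced by the policy `P` for the *critical*
push-pull network (`μ₁ = λ₁`, `μ₂ = λ₂`). -/
noncomputable def ppTrans (l1 l2 : ℝ) (P : PPState → PPAction) (z z' : PPState) : ℝ :=
  match P z with
  | (true, true) =>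
      (if z' = (z.1 + 1, z.2) then l1 / (l1 + l2) else 0) +
      (if z' = (z.1, z.2 + 1) then l2 / (l1 + l2) else 0)
  | (false, false) =>
      (if z' = (z.1 - 1, z.2) then l1 / (l1 + l2) else 0) +
      (if z' = (z.1, z.2 - 1) then l2 / (l1 + l2) else 0)
  | (true, false) =>
      (if z' = (z.1 + 1, z.2) then 1 / 2 else 0) +
      (if z' = (z.1 - 1, z.2) then 1 / 2 else 0)
  | (false, true) =>
      (if z' = (z.1, z.2 + 1) then 1 / 2 else 0) +
      (if z' = (z.1, z.2 - 1) then 1 / 2 else 0)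

/-- The linear function `g((x₁,x₂)) = λ₁ x₁ - λ₂ x₂`. -/
noncomputable def ppG (l1 l2 : ℝ) (z : PPState) : ℝ := l1 * z.1 - l2 * z.2

/-- `X` is a realization of a Markov chain with one-step transition probabilities `p`
on the filtered probability space `(Ω, ℱ, μ)`: it is adapted, and almost surely on
`{X n = z}`, the conditional probability given `ℱ n` that `X (n+1) = z'` equals `p z z'`. -/
def IsRealization {Ω : Type} {S : Type} [MeasurableSpace S] {mΩ : MeasurableSpace Ω}
    (μ : Measure Ω) (ℱ : Filtration ℕ mΩ) (X : ℕ → Ω → S) (p : S → S → ℝ) : Prop :=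
  (∀ n, Measurable[ℱ n] (X n)) ∧
  ∀ (n : ℕ) (z z' : S), ∀ᵐ ω ∂μ, X n ω = z →
    (μ[Set.indicator {ω' | X (n + 1) ω' = z'} (fun _ => (1 : ℝ)) | ℱ n]) ω = p z z'

/-- The hitting time of the state `y` by the process `X`, as an extended nonnegative
real number; it equals `∞` on the event that `y` is never hit. -/
noncomputable def hitTime {Ω S : Type*} (X : ℕ → Ω → S) (y : S) (ω : Ω) : ℝ≥0∞ :=
  sInf {t : ℝ≥0∞ | ∃ n : ℕ, X n ω = y ∧ (n : ℝ≥0∞) = t}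

/-- The harmonic function `f(z) = z₁/λ₁ - z₂/λ₂`. -/
noncomputable def ppF (l1 l2 : ℝ) (z : PPState) : ℝ := (z.1 : ℝ) / l1 - (z.2 : ℝ) / l2

lemma ppTrans_spec (l1 l2 : ℝ) (hl1 : 0 < l1) (hl2 : 0 < l2) {P : PPState → PPAction}
    (hP : NonIdling P) (z : PPState) :
    ∃ z₁ z₂ : PPState, z₁ ≠ z₂ ∧
      (∀ z', z' ≠ z₁ → z' ≠ z₂ → ppTrans l1 l2 P z z' = 0) ∧
      ppTrans l1 l2 P z z₁ + ppTrans l1 l2 P z z₂ = 1 ∧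
      ppTrans l1 l2 P z z₁ * ppF l1 l2 z₁ + ppTrans l1 l2 P z z₂ * ppF l1 l2 z₂
        = ppF l1 l2 z ∧
      (∀ w, (w = z₁ ∨ w = z₂) →
        min l1⁻¹ l2⁻¹ ≤ |ppF l1 l2 w - ppF l1 l2 z| ∧
        |ppF l1 l2 w - ppF l1 l2 z| ≤ max l1⁻¹ l2⁻¹) := by
  obtain ⟨zz1, zz2⟩ := z
  have hl12 : l1 + l2 ≠ 0 := by positivity
  have hl1' : l1 ≠ 0 := ne_of_gt hl1
  have hl2' : l2 ≠ 0 := ne_of_gt hl2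
  have hmin1 : min l1⁻¹ l2⁻¹ ≤ l1⁻¹ := min_le_left _ _
  have hmin2 : min l1⁻¹ l2⁻¹ ≤ l2⁻¹ := min_le_right _ _
  have hmax1 : l1⁻¹ ≤ max l1⁻¹ l2⁻¹ := le_max_left _ _
  have hmax2 : l2⁻¹ ≤ max l1⁻¹ l2⁻¹ := le_max_right _ _
  rcases hPz : P (zz1, zz2) with ⟨b1, b2⟩
  cases b1 <;> cases b2
  · -- (false, false): both pull
    have h1 : zz1 ≠ 0 := by
      rintro rfl
      have := hP.2 zz2
      rw [hPz] at this; exact Bool.false_ne_true this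
    have h2 : zz2 ≠ 0 := by
      rintro rfl
      have := hP.1 zz1
      rw [hPz] at this; exact Bool.false_ne_true this
    refine ⟨(zz1 - 1, zz2), (zz1, zz2 - 1), ?_, ?_, ?_, ?_, ?_⟩
    · intro h
      have := congrArg Prod.fst h
      simp only at this
      omega
    · intro z' hz1 hz2
      simp only [ppTrans, hPz, if_neg hz1, if_neg hz2, add_zero]
    · have hne : (zz1 - 1, zz2) ≠ (zz1, zz2 - 1) := by
        intro h; have := congrArg Prod.fst h; simp only at this; omega
      simp only [ppTrans, hPz]
      rw [if_neg hne, if_neg (Ne.symm hne)]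
      simp only [if_pos rfl, add_zero, zero_add, if_true]
      field_simp
    · have hne : (zz1 - 1, zz2) ≠ (zz1, zz2 - 1) := by
        intro h; have := congrArg Prod.fst h; simp only at this; omega
      simp only [ppTrans, hPz]
      rw [if_neg hne, if_neg (Ne.symm hne)]
      simp only [if_pos rfl, add_zero, zero_add, if_true]
      simp only [ppF]
      have c1 : ((zz1 - 1 : ℕ) : ℝ) = (zz1 : ℝ) - 1 := by
        have : 1 ≤ zz1 := Nat.one_le_iff_ne_zero.2 h1
        push_cast [this]; ring
      have c2 : ((zz2 - 1 : ℕ) : ℝ) = (zz2 : ℝ) - 1 := by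
        have : 1 ≤ zz2 := Nat.one_le_iff_ne_zero.2 h2
        push_cast [this]; ring
      rw [c1, c2]
      field_simp
      ring
    · rintro w (rfl | rfl) <;> simp only [ppF]
      · have c1 : ((zz1 - 1 : ℕ) : ℝ) = (zz1 : ℝ) - 1 := by
          have : 1 ≤ zz1 := Nat.one_le_iff_ne_zero.2 h1
          push_cast [this]; ring
        rw [c1]
        have heq : ((zz1:ℝ)-1) / l1 - (zz2:ℝ)/l2 - ((zz1:ℝ)/l1 - (zz2:ℝ)/l2) = -l1⁻¹ := by
          ring
        rw [heq, abs_neg, abs_of_pos (by positivity)]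
        exact ⟨hmin1, hmax1⟩
      · have c2 : ((zz2 - 1 : ℕ) : ℝ) = (zz2 : ℝ) - 1 := by
          have : 1 ≤ zz2 := Nat.one_le_iff_ne_zero.2 h2
          push_cast [this]; ring
        rw [c2]
        have heq : (zz1:ℝ)/l1 - ((zz2:ℝ)-1) / l2 - ((zz1:ℝ)/l1 - (zz2:ℝ)/l2) = l2⁻¹ := by
          ring
        rw [heq, abs_of_pos (by positivity)]
        exact ⟨hmin2, hmax2⟩
  · -- (false, true): server 1 pulls? no — moves x₂ ± 1
    have h2 : zz2 ≠ 0 := by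
      rintro rfl
      have := hP.1 zz1
      rw [hPz] at this; exact Bool.false_ne_true this
    have hne : ((zz1, zz2 + 1) : PPState) ≠ (zz1, zz2 - 1) := by
      intro h; have := congrArg Prod.snd h; simp only at this; omega
    have c2 : ((zz2 - 1 : ℕ) : ℝ) = (zz2 : ℝ) - 1 := by
      have : 1 ≤ zz2 := Nat.one_le_iff_ne_zero.2 h2
      push_cast [this]; ring
    refine ⟨(zz1, zz2 + 1), (zz1, zz2 - 1), hne, ?_, ?_, ?_, ?_⟩
    · intro z' hz1 hz2
      simp only [ppTrans, hPz, if_neg hz1, if_neg hz2, add_zero]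
    · simp only [ppTrans, hPz]
      rw [if_neg hne, if_neg (Ne.symm hne)]
      simp only [if_pos rfl, add_zero, zero_add]
      norm_num
    · simp only [ppTrans, hPz]
      rw [if_neg hne, if_neg (Ne.symm hne)]
      simp only [if_pos rfl, add_zero, zero_add, ppF]
      rw [c2]
      push_cast
      ring
    · rintro w (rfl | rfl) <;> simp only [ppF]
      · have heq : (zz1:ℝ)/l1 - ((zz2:ℕ)+1 : ℕ)/l2 - ((zz1:ℝ)/l1 - (zz2:ℝ)/l2) = -l2⁻¹ := by
          push_cast; ring
        rw [heq, abs_neg, abs_of_pos (by positivity)]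
        exact ⟨hmin2, hmax2⟩
      · rw [c2]
        have heq : (zz1:ℝ)/l1 - ((zz2:ℝ)-1)/l2 - ((zz1:ℝ)/l1 - (zz2:ℝ)/l2) = l2⁻¹ := by
          ring
        rw [heq, abs_of_pos (by positivity)]
        exact ⟨hmin2, hmax2⟩
  · -- (true, false): moves x₁ ± 1
    have h1 : zz1 ≠ 0 := by
      rintro rfl
      have := hP.2 zz2
      rw [hPz] at this; exact Bool.false_ne_true this
    have hne : ((zz1 + 1, zz2) : PPState) ≠ (zz1 - 1, zz2) := by
      intro h; have := congrArg Prod.fst h; simp only at this; omega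
    have c1 : ((zz1 - 1 : ℕ) : ℝ) = (zz1 : ℝ) - 1 := by
      have : 1 ≤ zz1 := Nat.one_le_iff_ne_zero.2 h1
      push_cast [this]; ring
    refine ⟨(zz1 + 1, zz2), (zz1 - 1, zz2), hne, ?_, ?_, ?_, ?_⟩
    · intro z' hz1 hz2
      simp only [ppTrans, hPz, if_neg hz1, if_neg hz2, add_zero]
    · simp only [ppTrans, hPz]
      rw [if_neg hne, if_neg (Ne.symm hne)]
      simp only [if_pos rfl, add_zero, zero_add]
      norm_num
    · simp only [ppTrans, hPz]
      rw [if_neg hne, if_neg (Ne.symm hne)]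
      simp only [if_pos rfl, add_zero, zero_add, ppF]
      rw [c1]
      push_cast
      ring
    · rintro w (rfl | rfl) <;> simp only [ppF]
      · have heq : ((zz1:ℕ)+1 : ℕ)/l1 - (zz2:ℝ)/l2 - ((zz1:ℝ)/l1 - (zz2:ℝ)/l2) = l1⁻¹ := by
          push_cast; ring
        rw [heq, abs_of_pos (by positivity)]
        exact ⟨hmin1, hmax1⟩
      · rw [c1]
        have heq : ((zz1:ℝ)-1)/l1 - (zz2:ℝ)/l2 - ((zz1:ℝ)/l1 - (zz2:ℝ)/l2) = -l1⁻¹ := by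
          ring
        rw [heq, abs_neg, abs_of_pos (by positivity)]
        exact ⟨hmin1, hmax1⟩
  · -- (true, true): both push
    have hne : ((zz1 + 1, zz2) : PPState) ≠ (zz1, zz2 + 1) := by
      intro h; have := congrArg Prod.fst h; simp only at this; omega
    refine ⟨(zz1 + 1, zz2), (zz1, zz2 + 1), hne, ?_, ?_, ?_, ?_⟩
    · intro z' hz1 hz2
      simp only [ppTrans, hPz, if_neg hz1, if_neg hz2, add_zero]
    · simp only [ppTrans, hPz]
      rw [if_neg hne, if_neg (Ne.symm hne)]
      simp only [if_pos rfl, add_zero, zero_add, if_true]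
      field_simp
    · simp only [ppTrans, hPz]
      rw [if_neg hne, if_neg (Ne.symm hne)]
      simp only [if_pos rfl, add_zero, zero_add, ppF]
      push_cast
      field_simp
      ring
    · rintro w (rfl | rfl) <;> simp only [ppF]
      · have heq : ((zz1:ℕ)+1 : ℕ)/l1 - (zz2:ℝ)/l2 - ((zz1:ℝ)/l1 - (zz2:ℝ)/l2) = l1⁻¹ := by
          push_cast; ring
        rw [heq, abs_of_pos (by positivity)]
        exact ⟨hmin1, hmax1⟩
      · have heq : (zz1:ℝ)/l1 - ((zz2:ℕ)+1 : ℕ)/l2 - ((zz1:ℝ)/l1 - (zz2:ℝ)/l2) = -l2⁻¹ := by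
          push_cast; ring
        rw [heq, abs_neg, abs_of_pos (by positivity)]
        exact ⟨hmin2, hmax2⟩

lemma hitTime_eq_iInf {Ω : Type*} (X : ℕ → Ω → PPState) (y : PPState) (ω : Ω) :
    hitTime X y ω = ⨅ n : ℕ, (if X n ω = y then (n : ℝ≥0∞) else ⊤) := by
  apply le_antisymm
  · refine le_iInf fun n => ?_
    by_cases h : X n ω = y
    · rw [if_pos h]; exact sInf_le ⟨n, h, rfl⟩
    · rw [if_neg h]; exact le_top
  · refine le_sInf fun t ht => ?_
    obtain ⟨n, hn, rfl⟩ := ht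
    exact (iInf_le _ n).trans (by rw [if_pos hn])

lemma hitTime_eq_find {Ω : Type*} (X : ℕ → Ω → PPState) (y : PPState) (ω : Ω)
    (h : ∃ n, X n ω = y) : hitTime X y ω = (Nat.find h : ℝ≥0∞) := by
  rw [hitTime_eq_iInf]
  apply le_antisymm
  · exact (iInf_le _ (Nat.find h)).trans (by rw [if_pos (Nat.find_spec h)])
  · refine le_iInf fun n => ?_
    by_cases hn : X n ω = y
    · rw [if_pos hn]
      exact_mod_cast Nat.cast_le.2 (Nat.find_min' h hn)
    · rw [if_neg hn]; exact le_top

lemma hitTime_eq_top {Ω : Type*} (X : ℕ → Ω → PPState) (y : PPState) (ω : Ω)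
    (h : ¬ ∃ n, X n ω = y) : hitTime X y ω = ⊤ := by
  rw [hitTime_eq_iInf]
  simp only [iInf_eq_top]
  intro n
  rw [if_neg (fun hn => h ⟨n, hn⟩)]

lemma hitTime_measurable {Ω : Type} {mΩ : MeasurableSpace Ω} (X : ℕ → Ω → PPState)
    (hXm : ∀ n, Measurable (X n)) (y : PPState) : Measurable (hitTime X y) := by
  have : (hitTime X y) = fun ω => ⨅ n : ℕ, (if X n ω = y then (n : ℝ≥0∞) else ⊤) :=
    funext fun ω => hitTime_eq_iInf X y ω
  rw [this]
  refine Measurable.iInf fun n => Measurable.ite ?_ measurable_const measurable_const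
  exact (hXm n) (measurableSet_singleton y)

/-- Transitions with zero probability are a.s. not taken. -/
lemma ppNull {Ω : Type} {mΩ : MeasurableSpace Ω} (μ : Measure Ω) [IsProbabilityMeasure μ]
    (ℱ : Filtration ℕ mΩ) (X : ℕ → Ω → PPState) (p : PPState → PPState → ℝ)
    (hX : IsRealization μ ℱ X p) (n : ℕ) (z z' : PPState) (hp : p z z' = 0) :
    μ (X n ⁻¹' {z} ∩ X (n + 1) ⁻¹' {z'}) = 0 := by
  haveI : SigmaFinite (μ.trim (ℱ.le n)) := by
    have : IsFiniteMeasure (μ.trim (ℱ.le n)) := isFiniteMeasure_trim _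
    infer_instance
  set A : Set Ω := X n ⁻¹' {z} with hA
  set B : Set Ω := {ω' | X (n + 1) ω' = z'} with hB
  have hAm : MeasurableSet[ℱ n] A := (hX.1 n) (measurableSet_singleton z)
  have hBm : MeasurableSet B := by
    have : Measurable (X (n + 1)) := (hX.1 (n + 1)).mono (ℱ.le (n + 1)) le_rfl
    exact this (measurableSet_singleton z')
  have hind : Integrable (B.indicator (fun _ => (1 : ℝ))) μ :=
    (integrable_const (1 : ℝ)).indicator hBm
  have h1 : ∫ ω in A, (μ[B.indicator (fun _ => (1 : ℝ)) | ℱ n]) ω ∂μ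
      = ∫ ω in A, B.indicator (fun _ => (1 : ℝ)) ω ∂μ :=
    setIntegral_condExp (ℱ.le n) hind hAm
  have h2 : ∫ ω in A, B.indicator (fun _ => (1 : ℝ)) ω ∂μ = (μ (A ∩ B)).toReal := by
    rw [setIntegral_indicator hBm]
    simp [Measure.restrict_apply ((ℱ.le n) _ hAm), measureReal_def]
  have h3 : ∫ ω in A, (μ[B.indicator (fun _ => (1 : ℝ)) | ℱ n]) ω ∂μ = 0 := by
    have hae : ∀ᵐ ω ∂(μ.restrict A), (μ[B.indicator (fun _ => (1 : ℝ)) | ℱ n]) ω = 0 := by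
      have := hX.2 n z z'
      rw [hp] at this
      refine (ae_restrict_iff' ((ℱ.le n) _ hAm)).2 ?_
      filter_upwards [this] with ω hω hmem
      exact hω hmem
    rw [integral_congr_ae hae, integral_zero]
  have : (μ (A ∩ B)).toReal = 0 := by rw [← h2, ← h1, h3]
  have hfin : μ (A ∩ B) ≠ ⊤ := measure_ne_top μ _
  exact (ENNReal.toReal_eq_zero_iff _).1 this |>.resolve_right hfin

/-- Almost surely, every step is a positive-probability transition. -/
lemma ppAeStep {Ω : Type} {mΩ : MeasurableSpace Ω} (μ : Measure Ω) [IsProbabilityMeasure μ]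
    (ℱ : Filtration ℕ mΩ) (X : ℕ → Ω → PPState) (p : PPState → PPState → ℝ)
    (hX : IsRealization μ ℱ X p) :
    ∀ᵐ ω ∂μ, ∀ n, p (X n ω) (X (n + 1) ω) ≠ 0 := by
  have key : ∀ᵐ ω ∂μ, ∀ (n : ℕ) (z z' : PPState), X n ω = z → X (n + 1) ω = z' → p z z' ≠ 0 := by
    rw [ae_all_iff]
    intro n
    rw [ae_all_iff]
    intro z
    rw [ae_all_iff]
    intro z'
    by_cases hp : p z z' = 0
    · have h0 := ppNull μ ℱ X p hX n z z' hp
      have := (measure_eq_zero_iff_ae_notMem).1 h0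
      filter_upwards [this] with ω hω h1 h2
      exact absurd ⟨h1, h2⟩ hω
    · exact Filter.Eventually.of_forall fun ω _ _ => hp
  filter_upwards [key] with ω hω n
  exact hω n _ _ rfl rfl

/-- The one-step martingale property of `ppF` along a realization. -/
lemma ppCondexpStep {Ω : Type} {mΩ : MeasurableSpace Ω} (μ : Measure Ω) [IsProbabilityMeasure μ]
    (ℱ : Filtration ℕ mΩ) (X : ℕ → Ω → PPState)
    (l1 l2 : ℝ) (hl1 : 0 < l1) (hl2 : 0 < l2) {P : PPState → PPAction} (hP : NonIdling P)
    (hX : IsRealization μ ℱ X (ppTrans l1 l2 P)) (n : ℕ)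
    (hint : Integrable (fun ω => ppF l1 l2 (X (n + 1) ω)) μ) :
    μ[(fun ω => ppF l1 l2 (X (n + 1) ω)) | ℱ n] =ᵐ[μ] fun ω => ppF l1 l2 (X n ω) := by
  haveI : SigmaFinite (μ.trim (ℱ.le n)) := by
    have : IsFiniteMeasure (μ.trim (ℱ.le n)) := isFiniteMeasure_trim _
    infer_instance
  set g := μ[(fun ω => ppF l1 l2 (X (n + 1) ω)) | ℱ n] with hg
  have key : ∀ z : PPState, ∀ᵐ ω ∂μ, X n ω = z → g ω = ppF l1 l2 z := by
    intro z
    obtain ⟨z₁, z₂, hne, hsupp, hsum, hdrift, _⟩ := ppTrans_spec l1 l2 hl1 hl2 hP z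
    set A : Set Ω := X n ⁻¹' {z} with hA
    have hAm : MeasurableSet[ℱ n] A := (hX.1 n) (measurableSet_singleton z)
    set B1 : Set Ω := {ω' | X (n + 1) ω' = z₁} with hB1
    set B2 : Set Ω := {ω' | X (n + 1) ω' = z₂} with hB2
    have hXn1 : Measurable (X (n + 1)) := (hX.1 (n + 1)).mono (ℱ.le (n + 1)) le_rfl
    have hB1m : MeasurableSet B1 := hXn1 (measurableSet_singleton z₁)
    have hB2m : MeasurableSet B2 := hXn1 (measurableSet_singleton z₂)
    have hmemA : ∀ ω, ω ∈ A ↔ X n ω = z := fun ω => Iff.rfl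
    -- a.e. on A the next state is z₁ or z₂
    have hAstep : ∀ᵐ ω ∂μ, ω ∈ A → (X (n + 1) ω = z₁ ∨ X (n + 1) ω = z₂) := by
      filter_upwards [ppAeStep μ ℱ X _ hX] with ω hω hmem
      by_contra hcon
      push_neg at hcon
      have h0 := hsupp (X (n + 1) ω) hcon.1 hcon.2
      have hne0 := hω n
      rw [(hmemA ω).1 hmem] at hne0
      exact hne0 h0
    -- integrability of indicator pieces
    have hind1 : Integrable ((A ∩ B1).indicator fun _ => (1 : ℝ)) μ :=
      (integrable_const (1 : ℝ)).indicator (((ℱ.le n) _ hAm).inter hB1m)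
    have hind2 : Integrable ((A ∩ B2).indicator fun _ => (1 : ℝ)) μ :=
      (integrable_const (1 : ℝ)).indicator (((ℱ.le n) _ hAm).inter hB2m)
    -- decomposition of the indicator of the next value
    have hdecomp : (A.indicator fun ω => ppF l1 l2 (X (n + 1) ω)) =ᵐ[μ]
        (fun ω => ppF l1 l2 z₁ • (A ∩ B1).indicator (fun _ => (1 : ℝ)) ω
          + ppF l1 l2 z₂ • (A ∩ B2).indicator (fun _ => (1 : ℝ)) ω) := by
      filter_upwards [hAstep] with ω hω
      by_cases hmem : ω ∈ A
      · rcases hω hmem with h1 | h2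
        · have hin : ω ∈ A ∩ B1 := ⟨hmem, h1⟩
          have hnot : ω ∉ A ∩ B2 := fun hc => hne (h1 ▸ hc.2 ▸ rfl)
          rw [Set.indicator_of_mem hmem, Set.indicator_of_mem hin, Set.indicator_of_notMem hnot,
            h1]
          simp
        · have hin : ω ∈ A ∩ B2 := ⟨hmem, h2⟩
          have hnot : ω ∉ A ∩ B1 := fun hc => hne (h2 ▸ hc.2 ▸ rfl)
          rw [Set.indicator_of_mem hmem, Set.indicator_of_mem hin, Set.indicator_of_notMem hnot,
            h2]
          simp
      · have hnot1 : ω ∉ A ∩ B1 := fun hc => hmem hc.1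
        have hnot2 : ω ∉ A ∩ B2 := fun hc => hmem hc.1
        rw [Set.indicator_of_notMem hmem, Set.indicator_of_notMem hnot1,
          Set.indicator_of_notMem hnot2]
        simp
    -- conditional expectations of the indicator pieces
    have hcond : ∀ (z' : PPState) (B : Set Ω), B = {ω' | X (n + 1) ω' = z'} →
        MeasurableSet B →
        μ[(A ∩ B).indicator (fun _ => (1 : ℝ)) | ℱ n] =ᵐ[μ]
          A.indicator (fun _ => ppTrans l1 l2 P z z') := by
      intro z' B hBdef hBm'
      have hiid : (A ∩ B).indicator (fun _ => (1 : ℝ))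
          = A.indicator (B.indicator fun _ => (1 : ℝ)) := (Set.indicator_indicator _ _ _).symm
      have hindB : Integrable (B.indicator fun _ => (1 : ℝ)) μ :=
        (integrable_const (1 : ℝ)).indicator hBm'
      have h1 : μ[(A ∩ B).indicator (fun _ => (1 : ℝ)) | ℱ n] =ᵐ[μ]
          A.indicator (μ[B.indicator (fun _ => (1 : ℝ)) | ℱ n]) := by
        rw [hiid]
        exact condExp_indicator hindB hAm
      refine h1.trans ?_
      have h2 := hX.2 n z z'
      filter_upwards [h2] with ω hω
      by_cases hmem : ω ∈ A
      · rw [Set.indicator_of_mem hmem, Set.indicator_of_mem hmem]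
        rw [← hBdef] at hω
        exact hω ((hmemA ω).1 hmem)
      · rw [Set.indicator_of_notMem hmem, Set.indicator_of_notMem hmem]
    have hcond1 := hcond z₁ B1 hB1 hB1m
    have hcond2 := hcond z₂ B2 hB2 hB2m
    -- conditional expectation of the decomposition
    have hce : μ[A.indicator (fun ω => ppF l1 l2 (X (n + 1) ω)) | ℱ n] =ᵐ[μ]
        A.indicator g := condExp_indicator hint hAm
    have hce2 : μ[A.indicator (fun ω => ppF l1 l2 (X (n + 1) ω)) | ℱ n] =ᵐ[μ]
        (fun ω => ppF l1 l2 z₁ • (A.indicator (fun _ => ppTrans l1 l2 P z z₁)) ω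
          + ppF l1 l2 z₂ • (A.indicator (fun _ => ppTrans l1 l2 P z z₂)) ω) := by
      refine (condExp_congr_ae hdecomp).trans ?_
      have hadd := condExp_add (μ := μ) (m := ℱ n)
        (hind1.smul (ppF l1 l2 z₁)) (hind2.smul (ppF l1 l2 z₂))
      refine hadd.trans ?_
      have hs1 := condExp_smul (μ := μ) (m := ℱ n) (ppF l1 l2 z₁)
        ((A ∩ B1).indicator (fun _ => (1 : ℝ)))
      have hs2 := condExp_smul (μ := μ) (m := ℱ n) (ppF l1 l2 z₂)
        ((A ∩ B2).indicator (fun _ => (1 : ℝ)))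
      filter_upwards [hs1, hs2, hcond1, hcond2] with ω h1 h2 h3 h4
      simp only [Pi.add_apply, Pi.smul_apply, smul_eq_mul] at h1 h2 h3 h4 ⊢
      rw [h1, h2, h3, h4]
    -- combine
    have hAg : A.indicator g =ᵐ[μ] A.indicator (fun _ => ppF l1 l2 z) := by
      refine (hce.symm.trans hce2).trans ?_
      refine Filter.Eventually.of_forall fun ω => ?_
      by_cases hmem : ω ∈ A
      · simp only [Set.indicator_of_mem hmem, smul_eq_mul]
        rw [← hdrift]; ring
      · simp only [Set.indicator_of_notMem hmem, smul_eq_mul, mul_zero, add_zero]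
    filter_upwards [hAg] with ω hω hXz
    have hmem : ω ∈ A := (hmemA ω).2 hXz
    rwa [Set.indicator_of_mem hmem, Set.indicator_of_mem hmem] at hω
  have hae := ae_all_iff.2 key
  filter_upwards [hae] with ω hω
  exact hω (X n ω) rfl

/-- Key orthogonality: integrating a bounded `ℱ n`-measurable weight against a
conditionally-centered increment gives zero. -/
lemma ppKeyInt {Ω : Type} {mΩ : MeasurableSpace Ω} (μ : Measure Ω) [IsProbabilityMeasure μ]
    (ℱ : Filtration ℕ mΩ) (n : ℕ) (D ψ : Ω → ℝ)
    (hD : Integrable D μ) (hcond : μ[D | ℱ n] =ᵐ[μ] 0)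
    (hψm : StronglyMeasurable[ℱ n] ψ) (hψb : ∀ ω, ‖ψ ω‖ ≤ 1) :
    ∫ ω, ψ ω * D ω ∂μ = 0 := by
  haveI : SigmaFinite (μ.trim (ℱ.le n)) := by
    have : IsFiniteMeasure (μ.trim (ℱ.le n)) := isFiniteMeasure_trim _
    infer_instance
  have hint : Integrable (fun ω => ψ ω * D ω) μ :=
    hD.bdd_mul (hψm.mono (ℱ.le n)).aestronglyMeasurable (Filter.Eventually.of_forall hψb)
  have h1 : ∫ ω, (μ[(fun ω' => ψ ω' * D ω') | ℱ n]) ω ∂μ = ∫ ω, ψ ω * D ω ∂μ :=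
    integral_condExp (ℱ.le n)
  have h2 : μ[(fun ω' => ψ ω' * D ω') | ℱ n] =ᵐ[μ] fun ω => ψ ω * (μ[D | ℱ n]) ω := by
    have := condExp_stronglyMeasurable_mul_of_bound (ℱ.le n) hψm hD 1
      (Filter.Eventually.of_forall hψb)
    exact this
  have h3 : (fun ω => ψ ω * (μ[D | ℱ n]) ω) =ᵐ[μ] fun _ => (0 : ℝ) := by
    filter_upwards [hcond] with ω hω
    simp [hω]
  rw [← h1, integral_congr_ae (h2.trans h3), integral_zero]

/-- Non-stabilizability of the critical push-pull network, hitting-time form: for any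
non-idling policy `P`, any realization `X` of the induced chain started at `x`, and any
state `y` with `λ₁ x₁ - λ₂ x₂ ≠ λ₁ y₁ - λ₂ y₂`, the hitting time of `y` has infinite
expectation. -/
theorem pushPull_hitting_time_infinite (l1 l2 : ℝ) (hl1 : 0 < l1) (hl2 : 0 < l2)
    (P : PPState → PPAction) (hP : NonIdling P)
    {Ω : Type} {mΩ : MeasurableSpace Ω} (μ : Measure Ω) [IsProbabilityMeasure μ]
    (ℱ : Filtration ℕ mΩ) (X : ℕ → Ω → PPState)
    (x : PPState) (hX0 : ∀ᵐ ω ∂μ, X 0 ω = x)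
    (hX : IsRealization μ ℱ X (ppTrans l1 l2 P))
    (y : PPState) (hxy : ppG l1 l2 x ≠ ppG l1 l2 y) :
    ∫⁻ ω, hitTime X y ω ∂μ = ⊤ := by
  by_contra hfin
  set δ : ℝ := min l1⁻¹ l2⁻¹ with hδdef
  set C : ℝ := max l1⁻¹ l2⁻¹ with hCdef
  have hδ : 0 < δ := lt_min (by positivity) (by positivity)
  have hC : 0 < C := lt_of_lt_of_le hδ min_le_max
  have hfm : Measurable (ppF l1 l2) := measurable_of_countable _
  have hXm : ∀ n, Measurable (X n) := fun n => (hX.1 n).mono (ℱ.le n) le_rfl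
  set M : ℕ → Ω → ℝ := fun n ω => ppF l1 l2 (X n ω) with hM
  have hMm : ∀ n, Measurable (M n) := fun n => hfm.comp (hXm n)
  have hxny : x ≠ y := fun h => hxy (by rw [h])
  -- step bounds a.e.
  have hstep : ∀ᵐ ω ∂μ, ∀ n, δ ≤ |M (n + 1) ω - M n ω| ∧ |M (n + 1) ω - M n ω| ≤ C := by
    filter_upwards [ppAeStep μ ℱ X _ hX] with ω hω n
    obtain ⟨z₁, z₂, hne, hsupp, -, -, hbd⟩ := ppTrans_spec l1 l2 hl1 hl2 hP (X n ω)
    have hor : X (n + 1) ω = z₁ ∨ X (n + 1) ω = z₂ := by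
      by_contra hc; push_neg at hc
      exact (hω n) (hsupp _ hc.1 hc.2)
    exact hbd _ hor
  -- M n bounded a.e.
  have hMbd : ∀ᵐ ω ∂μ, ∀ n, |M n ω| ≤ |ppF l1 l2 x| + n * C := by
    filter_upwards [hstep, hX0] with ω hω h0
    intro n
    induction n with
    | zero => simp [hM, h0]
    | succ k ih =>
        have h1 := (hω k).2
        have h2 : |M (k + 1) ω| ≤ |M k ω| + |M (k + 1) ω - M k ω| := by
          have := abs_add_le (M k ω) (M (k + 1) ω - M k ω)
          simpa using this
        have hexp : ((k : ℝ) + 1) * C = (k : ℝ) * C + C := by ring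
        push_cast
        linarith
  have hMint : ∀ n, Integrable (M n) μ := by
    intro n
    refine Integrable.mono' (integrable_const (|ppF l1 l2 x| + n * C))
      (hMm n).aestronglyMeasurable ?_
    filter_upwards [hMbd] with ω h
    simpa [Real.norm_eq_abs] using h n
  have hDint : ∀ n, Integrable (fun ω => M (n + 1) ω - M n ω) μ := fun n =>
    (hMint (n + 1)).sub (hMint n)
  -- conditional expectation of increments is zero
  have hDcond : ∀ n, μ[(fun ω => M (n + 1) ω - M n ω) | ℱ n] =ᵐ[μ] fun _ => (0 : ℝ) := by
    intro n
    haveI : SigmaFinite (μ.trim (ℱ.le n)) := by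
      have : IsFiniteMeasure (μ.trim (ℱ.le n)) := isFiniteMeasure_trim _
      infer_instance
    have h1 := ppCondexpStep μ ℱ X l1 l2 hl1 hl2 hP hX n (hMint (n + 1))
    have h2 := condExp_sub (μ := μ) (m := ℱ n) (hMint (n + 1)) (hMint n)
    have h3 : μ[M n | ℱ n] = M n := by
      refine condExp_of_stronglyMeasurable (ℱ.le n) ?_ (hMint n)
      exact (Measurable.stronglyMeasurable (hfm.comp (hX.1 n)))
    refine h2.trans ?_
    rw [h3]
    filter_upwards [h1] with ω hω
    simp only [Pi.sub_apply, hω]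
    simp [hM, hω]
  -- hitting time data
  have hhitm : Measurable (hitTime X y) := hitTime_measurable X hXm y
  have hhit : ∀ᵐ ω ∂μ, ∃ n, X n ω = y := by
    have hlt : ∀ᵐ ω ∂μ, hitTime X y ω < ⊤ := ae_lt_top hhitm hfin
    filter_upwards [hlt] with ω hω
    by_contra hc
    rw [hitTime_eq_top X y ω hc] at hω
    exact absurd hω (lt_irrefl _)
  set Treal : Ω → ℝ := fun ω => (hitTime X y ω).toReal with hTreal
  have hTint : Integrable Treal μ :=
    integrable_toReal_of_lintegral_ne_top hhitm.aemeasurable hfin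
  -- the stopped process
  set G : ℕ → Set Ω := fun k => {ω | ∀ j ≤ k, X j ω ≠ y} with hG
  have hGm : ∀ k, MeasurableSet[ℱ k] (G k) := by
    intro k
    have hGeq : G k = ⋂ (j : ℕ) (_ : j ≤ k), (X j ⁻¹' {y})ᶜ := by
      ext ω; simp [hG]
    rw [hGeq]
    exact MeasurableSet.iInter fun j => MeasurableSet.iInter fun hj =>
      MeasurableSet.compl (((hX.1 j).mono (ℱ.mono hj) le_rfl) (measurableSet_singleton y))
  set N : ℕ → Ω → ℝ := fun n ω =>
    M 0 ω + ∑ k ∈ Finset.range n, (G k).indicator (fun ω' => M (k + 1) ω' - M k ω') ω with hN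
  have hNm : ∀ n, Measurable (N n) := by
    intro n
    refine (hMm 0).add ?_
    refine Finset.measurable_sum _ fun k _ => ?_
    exact ((hMm (k + 1)).sub (hMm k)).indicator ((ℱ.le k) _ (hGm k))
  -- pointwise control of the stopped process
  have hptwise : ∀ᵐ ω ∂μ,
      (∀ n, |N n ω| ≤ |ppF l1 l2 x| + C * Treal ω) ∧
      Filter.Tendsto (fun n => N n ω) Filter.atTop (nhds (ppF l1 l2 y)) := by
    filter_upwards [hhit, hstep, hX0, hMbd] with ω hex hst h0 hmb
    set τ : ℕ := Nat.find hex with hτdef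
    have hτ : ∀ n, N n ω = M (min n τ) ω := by
      intro n
      induction n with
      | zero => simp [hN]
      | succ k ih =>
        have hNs : N (k + 1) ω = N k ω
            + (G k).indicator (fun ω' => M (k + 1) ω' - M k ω') ω := by
          simp only [hN, Finset.sum_range_succ]
          ring
        rcases lt_or_ge k τ with hlt | hle
        · have hmem : ω ∈ G k := fun j hj => Nat.find_min hex (lt_of_le_of_lt hj hlt)
          rw [hNs, ih, Set.indicator_of_mem hmem, min_eq_left hlt.le,
            min_eq_left (Nat.succ_le_of_lt hlt)]
          ring
        · have hnot : ω ∉ G k := fun hmem => hmem τ hle (Nat.find_spec hex)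
          rw [hNs, ih, Set.indicator_of_notMem hnot, add_zero, min_eq_right hle,
            min_eq_right (hle.trans (Nat.le_succ k))]
    have hTval : Treal ω = (τ : ℝ) := by
      rw [hTreal]
      simp only
      rw [hitTime_eq_find X y ω hex]
      simp [hτdef]
    constructor
    · intro n
      rw [hτ n, hTval]
      have h1 := hmb (min n τ)
      have h2 : ((min n τ : ℕ) : ℝ) ≤ (τ : ℝ) := Nat.cast_le.2 (min_le_right _ _)
      have h3 : ((min n τ : ℕ) : ℝ) * C ≤ (τ : ℝ) * C :=
        mul_le_mul_of_nonneg_right h2 hC.le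
      calc |M (min n τ) ω| ≤ |ppF l1 l2 x| + (min n τ : ℕ) * C := h1
        _ ≤ |ppF l1 l2 x| + C * (τ : ℝ) := by rw [mul_comm C]; linarith
    · have hconst : ∀ n ≥ τ, N n ω = ppF l1 l2 y := by
        intro n hn
        rw [hτ n, min_eq_right hn]
        simp only [hM]
        rw [Nat.find_spec hex]
      exact tendsto_atTop_of_eventually_const hconst
  have hbound_int : Integrable (fun ω => |ppF l1 l2 x| + C * Treal ω) μ :=
    (integrable_const _).add (hTint.const_mul C)
  have hNint : ∀ n, Integrable (N n) μ := by
    intro n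
    refine Integrable.mono' hbound_int (hNm n).aestronglyMeasurable ?_
    filter_upwards [hptwise] with ω h
    simpa [Real.norm_eq_abs] using h.1 n
  -- expectation of the stopped process is constant
  have hindicator_mul : ∀ k (ω : Ω), (G k).indicator (fun ω' => M (k + 1) ω' - M k ω') ω
      = (G k).indicator (fun _ => (1 : ℝ)) ω * (M (k + 1) ω - M k ω) := by
    intro k ω
    by_cases h : ω ∈ G k <;> simp [h]
  have hGind_int : ∀ k, Integrable ((G k).indicator (fun ω' => M (k + 1) ω' - M k ω')) μ :=
    fun k => (hDint k).indicator ((ℱ.le k) _ (hGm k))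
  have hindsum : ∀ k, ∫ ω, (G k).indicator (fun ω' => M (k + 1) ω' - M k ω') ω ∂μ = 0 := by
    intro k
    have h1 : ∫ ω, (G k).indicator (fun ω' => M (k + 1) ω' - M k ω') ω ∂μ
        = ∫ ω, (G k).indicator (fun _ => (1 : ℝ)) ω * (M (k + 1) ω - M k ω) ∂μ :=
      integral_congr_ae (Filter.Eventually.of_forall fun ω => hindicator_mul k ω)
    rw [h1]
    refine ppKeyInt μ ℱ k _ _ (hDint k) (hDcond k)
      (stronglyMeasurable_const.indicator (hGm k)) ?_
    intro ω
    by_cases h : ω ∈ G k <;> simp [h]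
  have hEN : ∀ n, ∫ ω, N n ω ∂μ = ppF l1 l2 x := by
    intro n
    have hsum_int : Integrable
        (fun ω => ∑ k ∈ Finset.range n, (G k).indicator (fun ω' => M (k + 1) ω' - M k ω') ω) μ :=
      integrable_finset_sum _ fun k _ => hGind_int k
    have h1 : ∫ ω, N n ω ∂μ = ∫ ω, M 0 ω ∂μ
        + ∫ ω, (∑ k ∈ Finset.range n, (G k).indicator (fun ω' => M (k + 1) ω' - M k ω') ω) ∂μ := by
      rw [hN]
      exact integral_add (hMint 0) hsum_int
    have h2 : ∫ ω, (∑ k ∈ Finset.range n,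
        (G k).indicator (fun ω' => M (k + 1) ω' - M k ω') ω) ∂μ = 0 := by
      rw [integral_finset_sum _ fun k _ => hGind_int k]
      exact Finset.sum_eq_zero fun k _ => hindsum k
    have h3 : ∫ ω, M 0 ω ∂μ = ppF l1 l2 x := by
      have : M 0 =ᵐ[μ] fun _ => ppF l1 l2 x := by
        filter_upwards [hX0] with ω h0
        simp [hM, h0]
      rw [integral_congr_ae this]
      simp
    rw [h1, h2, h3, add_zero]
  -- first conclusion: ppF x = ppF y
  have hfxy : ppF l1 l2 x = ppF l1 l2 y := by
    have hlim1 : Filter.Tendsto (fun n => ∫ ω, N n ω ∂μ) Filter.atTop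
        (nhds (∫ _, ppF l1 l2 y ∂μ)) := by
      refine tendsto_integral_of_dominated_convergence _
        (fun n => (hNm n).aestronglyMeasurable) hbound_int ?_ ?_
      · intro n
        filter_upwards [hptwise] with ω h
        simpa [Real.norm_eq_abs] using h.1 n
      · filter_upwards [hptwise] with ω h
        exact h.2
    have hconst : Filter.Tendsto (fun n => ∫ ω, N n ω ∂μ) Filter.atTop
        (nhds (ppF l1 l2 x)) := by
      have : (fun n => ∫ ω, N n ω ∂μ) = fun _ => ppF l1 l2 x := funext fun n => hEN n
      rw [this]
      exact tendsto_const_nhds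
    have := tendsto_nhds_unique hconst hlim1
    rwa [integral_const, probReal_univ, one_smul] at this
  -- second part: contradiction via the sign of the first increment
  set a : ℝ := ppF l1 l2 y with ha
  set S : Ω → ℝ := fun ω => if a ≤ M 1 ω then 1 else -1 with hS
  have hSm1 : StronglyMeasurable[ℱ 1] S := by
    have hM1 : Measurable[ℱ 1] (M 1) := hfm.comp (hX.1 1)
    exact (Measurable.ite (measurableSet_le measurable_const hM1)
      measurable_const measurable_const).stronglyMeasurable
  have hSb : ∀ ω, ‖S ω‖ ≤ 1 := by
    intro ω
    simp only [hS]
    by_cases h : a ≤ M 1 ω <;> simp [h]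
  have hSabs : ∀ ω, (M 1 ω - a) * S ω = |M 1 ω - a| := by
    intro ω
    simp only [hS]
    by_cases h : a ≤ M 1 ω
    · rw [if_pos h, mul_one, abs_of_nonneg (sub_nonneg.2 h)]
    · rw [if_neg h, mul_neg_one, abs_of_neg (sub_neg.2 (lt_of_not_ge h))]
  set J : ℕ → ℝ := fun n => ∫ ω, (N n ω - a) * S ω ∂μ with hJ
  have hJint : ∀ n, Integrable (fun ω => (N n ω - a) * S ω) μ := by
    intro n
    refine Integrable.bdd_mul (c := 1) (((hNint n).sub (integrable_const a)))
      ((hSm1.mono (ℱ.le 1)).aestronglyMeasurable) (Filter.Eventually.of_forall hSb) |>.congr ?_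
    exact Filter.Eventually.of_forall fun ω => by simp only [Pi.sub_apply]; ring
  have hJstep : ∀ n, 1 ≤ n → J (n + 1) = J n := by
    intro n hn
    have hψm : StronglyMeasurable[ℱ n]
        (fun ω => (G n).indicator (fun _ => (1 : ℝ)) ω * S ω) :=
      (stronglyMeasurable_const.indicator (hGm n)).mul (hSm1.mono (ℱ.mono hn))
    have hψb : ∀ ω, ‖(G n).indicator (fun _ => (1 : ℝ)) ω * S ω‖ ≤ 1 := by
      intro ω
      rw [norm_mul]
      by_cases h : ω ∈ G n
      · simpa [h] using hSb ω
      · simp [h]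
    have h0 := ppKeyInt μ ℱ n _ _ (hDint n) (hDcond n) hψm hψb
    have hdiff : J (n + 1) - J n = ∫ ω,
        ((G n).indicator (fun _ => (1 : ℝ)) ω * S ω) * (M (n + 1) ω - M n ω) ∂μ := by
      rw [hJ]
      simp only
      rw [← integral_sub (hJint (n + 1)) (hJint n)]
      refine integral_congr_ae (Filter.Eventually.of_forall fun ω => ?_)
      simp only [Pi.sub_apply]
      have hNdiff : N (n + 1) ω - N n ω
          = (G n).indicator (fun ω' => M (n + 1) ω' - M n ω') ω := by
        simp only [hN, Finset.sum_range_succ]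
        ring
      have : (N (n + 1) ω - a) * S ω - (N n ω - a) * S ω = (N (n + 1) ω - N n ω) * S ω := by
        ring
      rw [this, hNdiff, hindicator_mul n ω]
      ring
    have : J (n + 1) - J n = 0 := by rw [hdiff, h0]
    linarith
  have hJconst : ∀ n, 1 ≤ n → J n = J 1 := by
    intro n
    induction n with
    | zero => intro h; omega
    | succ k ih =>
      intro h
      rcases Nat.lt_or_ge k 1 with hk | hk
      · have : k = 0 := by omega
        rw [this]
      · rw [hJstep k hk, ih hk]
  have hJ1 : δ ≤ J 1 := by
    have hN1 : ∀ᵐ ω ∂μ, (N 1 ω - a) * S ω = |M 1 ω - a| := by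
      filter_upwards [hX0] with ω h0
      have hmem : ω ∈ G 0 := by
        intro j hj
        have : j = 0 := Nat.le_zero.1 hj
        rw [this, h0]
        exact hxny
      have hN1eq : N 1 ω = M 1 ω := by
        simp only [hN, Finset.sum_range_succ, Finset.sum_range_zero, zero_add,
          Set.indicator_of_mem hmem]
        ring
      rw [hN1eq, hSabs]
    have habs : ∀ᵐ ω ∂μ, δ ≤ |M 1 ω - a| := by
      filter_upwards [hstep, hX0] with ω hst h0
      have hM0 : M 0 ω = a := by
        simp only [hM]
        rw [h0, hfxy]
      calc δ ≤ |M 1 ω - M 0 ω| := (hst 0).1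
        _ = |M 1 ω - a| := by rw [hM0]
    have hmono : ∫ _, δ ∂μ ≤ ∫ ω, (N 1 ω - a) * S ω ∂μ := by
      refine integral_mono_ae (integrable_const δ) (hJint 1) ?_
      filter_upwards [hN1, habs] with ω h1 h2
      rw [h1]
      exact h2
    calc δ = ∫ _, δ ∂μ := by simp
      _ ≤ J 1 := hmono
  have hlim2 : Filter.Tendsto J Filter.atTop (nhds 0) := by
    have h0int : (0 : ℝ) = ∫ ω, (fun _ => (0 : ℝ)) ω ∂μ := by simp
    rw [h0int]
    refine tendsto_integral_of_dominated_convergence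
      (fun ω => |ppF l1 l2 x| + C * Treal ω + |a|)
      (fun n => ((hNm n).sub measurable_const).mul
        ((hSm1.mono (ℱ.le 1)).measurable.mono le_rfl le_rfl) |>.aestronglyMeasurable)
      ((hbound_int.add (integrable_const |a|))) ?_ ?_
    · intro n
      filter_upwards [hptwise] with ω h
      have h1 : ‖(N n ω - a) * S ω‖ ≤ |N n ω - a| := by
        rw [norm_mul]
        have := hSb ω
        calc ‖N n ω - a‖ * ‖S ω‖ ≤ ‖N n ω - a‖ * 1 :=
              mul_le_mul_of_nonneg_left this (norm_nonneg _)
          _ = |N n ω - a| := by rw [mul_one, Real.norm_eq_abs]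
      have h2 : |N n ω - a| ≤ |N n ω| + |a| := abs_sub _ _
      have h3 := h.1 n
      calc ‖(N n ω - a) * S ω‖ ≤ |N n ω| + |a| := h1.trans h2
        _ ≤ |ppF l1 l2 x| + C * Treal ω + |a| := by linarith
    · filter_upwards [hptwise] with ω h
      have : Filter.Tendsto (fun n => (N n ω - a) * S ω) Filter.atTop
          (nhds ((ppF l1 l2 y - a) * S ω)) := ((h.2.sub tendsto_const_nhds).mul_const _)
      simpa [ha] using this
  have hlimJ : Filter.Tendsto J Filter.atTop (nhds (J 1)) :=
    tendsto_atTop_of_eventually_const hJconst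
  have hJ10 : J 1 = 0 := tendsto_nhds_unique hlimJ hlim2
  linarith
end

section
/- (General non-stabilizability criterion, hitting-time form.) Suppose there exists α ∈ ℝ^M with α ≠ 0 such that α is orthogonal to the drift of every action: α⋅Δ_a = 0 for every a ∈ 𝒜. Then for every policy 𝒫, every realization (X_n) of the induced chain started at a state x ∈ ℤ₊^M, and every state y ∈ ℤ₊^M with α⋅x ≠ α⋅y, the hitting time T_y = inf{n ≥ 0 : X_n = y} has infinite expectation: E[T_y] = ∞. -/
open MeasureTheory
open scoped ENNReal

/-- The `i`-th standard basis vector of `ℤ^M`. -/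
def stdZ (M : ℕ) (i : Fin M) : Fin M → ℤ := fun k => if k = i then 1 else 0

/-- The support of each step distribution `P̃ₐ` consists only of vectors of the form
`eᵢ`, `-eᵢ`, or `eᵢ - eⱼ` with `i ≠ j`. -/
def QueueSupport (M : ℕ) {A : Type} (Ptil : A → PMF (Fin M → ℤ)) : Prop :=
  ∀ a : A, ∀ d ∈ (Ptil a).support,
    (∃ i, d = stdZ M i) ∨ (∃ i, d = -stdZ M i) ∨
    (∃ i j, i ≠ j ∧ d = stdZ M i - stdZ M j)

/-- The drift vector `Δₐ = ∑_d d ⬝ P̃ₐ(d) ∈ ℝ^M` of action `a`. -/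
noncomputable def drift (M : ℕ) {A : Type} (Ptil : A → PMF (Fin M → ℤ)) (a : A) :
    Fin M → ℝ :=
  fun k => ∑' d : Fin M → ℤ, ((Ptil a) d).toReal * (d k : ℝ)

/-- The allowed actions keep the state in `ℤ₊^M`: from state `z`, any displacement `d`
in the support of an allowed action leads to a nonnegative state. -/
def StateConsistent (M : ℕ) {A : Type} (Ptil : A → PMF (Fin M → ℤ))
    (Act : (Fin M → ℕ) → Set A) : Prop :=
  ∀ z : Fin M → ℕ, ∀ a ∈ Act z, ∀ d ∈ (Ptil a).support, ∀ k, (0 : ℤ) ≤ (z k : ℤ) + d k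

/-- Transition probabilities of the chain induced by the policy `pol`:
`p (z, z + d) = P̃_{pol z} (d)`. -/
noncomputable def hcqnTrans (M : ℕ) {A : Type} (Ptil : A → PMF (Fin M → ℤ))
    (pol : (Fin M → ℕ) → A) (z z' : Fin M → ℕ) : ℝ :=
  ((Ptil (pol z)) (fun k => (z' k : ℤ) - (z k : ℤ))).toReal

namespace HCQN

variable {M : ℕ} {A : Type}

/-- A finite set containing the support of every step distribution. -/
noncomputable def Dset (M : ℕ) : Finset (Fin M → ℤ) :=
  (Finset.univ.image (stdZ M)) ∪ (Finset.univ.image (fun i => -stdZ M i)) ∪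
  ((Finset.univ : Finset (Fin M × Fin M)).image (fun q => stdZ M q.1 - stdZ M q.2))

lemma support_subset_Dset (Ptil : A → PMF (Fin M → ℤ)) (hsupp : QueueSupport M Ptil)
    (a : A) : (Ptil a).support ⊆ ↑(Dset M) := by
  intro d hd
  rcases hsupp a d hd with ⟨i, rfl⟩ | ⟨i, rfl⟩ | ⟨i, j, _, rfl⟩
  · simp [Dset]
  · simp [Dset]
  · simp only [Dset, Finset.coe_union, Set.mem_union, Finset.coe_image, Set.mem_image]
    right
    exact ⟨(i, j), by simp⟩

def fval (α : Fin M → ℝ) (z : Fin M → ℕ) : ℝ := ∑ k, α k * (z k : ℝ)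
def gval (α : Fin M → ℝ) (d : Fin M → ℤ) : ℝ := ∑ k, α k * (d k : ℝ)

lemma fval_sub (α : Fin M → ℝ) (z z' : Fin M → ℕ) :
    fval α z' - fval α z = gval α (fun k => (z' k : ℤ) - (z k : ℤ)) := by
  simp only [fval, gval, ← Finset.sum_sub_distrib]
  congr 1; ext k; push_cast; ring

lemma pmf_sum_congr {β : Type*} (q : PMF β) (F : β → ℝ) (s t : Finset β)
    (hs : q.support ⊆ ↑s) (ht : q.support ⊆ ↑t) :
    ∑ e ∈ s, F e * (q e).toReal = ∑ e ∈ t, F e * (q e).toReal := by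
  classical
  have h1 : ∑ e ∈ s ∩ t, F e * (q e).toReal = ∑ e ∈ s, F e * (q e).toReal := by
    refine Finset.sum_subset (Finset.inter_subset_left) ?_
    intro e hes het
    have : e ∉ q.support := fun h => het (Finset.mem_inter.2 ⟨hes, ht h⟩)
    simp [PMF.apply_eq_zero_iff q e |>.2 (by simpa [PMF.mem_support_iff] using this)]
  have h2 : ∑ e ∈ s ∩ t, F e * (q e).toReal = ∑ e ∈ t, F e * (q e).toReal := by
    refine Finset.sum_subset (Finset.inter_subset_right) ?_
    intro e het hes
    have : e ∉ q.support := fun h => hes (Finset.mem_inter.2 ⟨hs h, het⟩)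
    simp [PMF.apply_eq_zero_iff q e |>.2 (by simpa [PMF.mem_support_iff] using this)]
  rw [← h1, h2]

lemma pmf_sum_one {β : Type*} (q : PMF β) (s : Finset β) (hs : q.support ⊆ ↑s) :
    ∑ e ∈ s, (q e).toReal = 1 := by
  have h0 : ∑' e, q e = 1 := q.tsum_coe
  have h1 : ∑' e, q e = ∑ e ∈ s, q e := by
    refine tsum_eq_sum ?_
    intro e he
    by_contra h
    exact he (hs (by simpa [PMF.mem_support_iff] using h))
  have h2 : ∑ e ∈ s, q e = 1 := by rw [← h1, h0]
  calc ∑ e ∈ s, (q e).toReal = (∑ e ∈ s, q e).toReal :=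
        (ENNReal.toReal_sum (fun e _ => q.apply_ne_top e)).symm
    _ = 1 := by rw [h2]; simp

lemma drift_sum (Ptil : A → PMF (Fin M → ℤ)) (hsupp : QueueSupport M Ptil)
    (α : Fin M → ℝ) (a : A) :
    ∑ d ∈ Dset M, gval α d * ((Ptil a) d).toReal = ∑ k, α k * drift M Ptil a k := by
  have hdr : ∀ k, drift M Ptil a k = ∑ d ∈ Dset M, ((Ptil a) d).toReal * (d k : ℝ) := by
    intro k
    refine tsum_eq_sum ?_
    intro d hd
    have h0 : (Ptil a) d = 0 := by
      by_contra h
      have hd2 : d ∈ (Ptil a).support := by simpa [PMF.mem_support_iff] using h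
      exact hd (Finset.mem_coe.1 (support_subset_Dset Ptil hsupp a hd2))
    simp [h0]
  calc ∑ d ∈ Dset M, gval α d * ((Ptil a) d).toReal
      = ∑ d ∈ Dset M, ∑ k, α k * (((Ptil a) d).toReal * (d k : ℝ)) := by
        refine Finset.sum_congr rfl fun d _ => ?_
        rw [gval, Finset.sum_mul]
        refine Finset.sum_congr rfl fun k _ => by ring
    _ = ∑ k, ∑ d ∈ Dset M, α k * (((Ptil a) d).toReal * (d k : ℝ)) := Finset.sum_comm
    _ = ∑ k, α k * drift M Ptil a k := by
        refine Finset.sum_congr rfl fun k _ => ?_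
        rw [hdr k, Finset.mul_sum]

end HCQN

-- #### Layer 2
namespace HCQN
variable {M : ℕ} {A : Type}

def shiftz (z : Fin M → ℕ) (d : Fin M → ℤ) : Fin M → ℕ := fun k => ((z k : ℤ) + d k).toNat

noncomputable def Sset (M : ℕ) (z : Fin M → ℕ) : Finset (Fin M → ℕ) :=
  (Dset M).image (shiftz z)

def phiz (z z' : Fin M → ℕ) : Fin M → ℤ := fun k => (z' k : ℤ) - (z k : ℤ)

lemma phiz_inj (z : Fin M → ℕ) : Function.Injective (phiz z) := by
  intro a b hab
  funext k
  have := congrFun hab k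
  simp only [phiz] at this
  omega

lemma trans_eq (Ptil : A → PMF (Fin M → ℤ)) (pol : (Fin M → ℕ) → A) (z z' : Fin M → ℕ) :
    hcqnTrans M Ptil pol z z' = ((Ptil (pol z)) (phiz z z')).toReal := rfl

lemma mem_Sset_of_trans_ne (Ptil : A → PMF (Fin M → ℤ)) (hsupp : QueueSupport M Ptil)
    (pol : (Fin M → ℕ) → A) (z z' : Fin M → ℕ) (h : hcqnTrans M Ptil pol z z' ≠ 0) :
    phiz z z' ∈ (Ptil (pol z)).support ∧ z' ∈ Sset M z := by
  have h1 : (Ptil (pol z)) (phiz z z') ≠ 0 := by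
    intro h0; rw [trans_eq] at h; simp [h0] at h
  have hsup : phiz z z' ∈ (Ptil (pol z)).support := by simpa [PMF.mem_support_iff] using h1
  refine ⟨hsup, ?_⟩
  have hD : phiz z z' ∈ Dset M :=
    Finset.mem_coe.1 (support_subset_Dset Ptil hsupp (pol z) hsup)
  refine Finset.mem_image.2 ⟨phiz z z', hD, ?_⟩
  funext k
  simp only [shiftz, phiz]
  omega

lemma phiz_shiftz (Act : (Fin M → ℕ) → Set A) (Ptil : A → PMF (Fin M → ℤ))
    (hcons : StateConsistent M Ptil Act) (pol : (Fin M → ℕ) → A) (hpol : ∀ z, pol z ∈ Act z)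
    (z : Fin M → ℕ) (e : Fin M → ℤ) (he : e ∈ (Ptil (pol z)).support) :
    phiz z (shiftz z e) = e := by
  funext k
  have hk := hcons z (pol z) (hpol z) e he k
  simp only [phiz, shiftz]
  omega

lemma support_subset_Eset (Act : (Fin M → ℕ) → Set A) (Ptil : A → PMF (Fin M → ℤ))
    (hsupp : QueueSupport M Ptil) (hcons : StateConsistent M Ptil Act)
    (pol : (Fin M → ℕ) → A) (hpol : ∀ z, pol z ∈ Act z) (z : Fin M → ℕ) :
    (Ptil (pol z)).support ⊆ ↑((Sset M z).image (phiz z)) := by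
  intro e he
  have hD : e ∈ Dset M := Finset.mem_coe.1 (support_subset_Dset Ptil hsupp (pol z) he)
  refine Finset.mem_coe.2 (Finset.mem_image.2 ⟨shiftz z e, ?_, ?_⟩)
  · exact Finset.mem_image.2 ⟨e, hD, rfl⟩
  · exact phiz_shiftz Act Ptil hcons pol hpol z e he

lemma sum_trans_one (Act : (Fin M → ℕ) → Set A) (Ptil : A → PMF (Fin M → ℤ))
    (hsupp : QueueSupport M Ptil) (hcons : StateConsistent M Ptil Act)
    (pol : (Fin M → ℕ) → A) (hpol : ∀ z, pol z ∈ Act z) (z : Fin M → ℕ) :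
    ∑ z' ∈ Sset M z, hcqnTrans M Ptil pol z z' = 1 := by
  classical
  have hinj : ∀ x ∈ Sset M z, ∀ y ∈ Sset M z, phiz z x = phiz z y → x = y :=
    fun x _ y _ h => phiz_inj z h
  have h1 : ∑ e ∈ (Sset M z).image (phiz z), ((Ptil (pol z)) e).toReal
      = ∑ z' ∈ Sset M z, ((Ptil (pol z)) (phiz z z')).toReal := Finset.sum_image hinj
  rw [show (fun z' => hcqnTrans M Ptil pol z z') = fun z' => ((Ptil (pol z)) (phiz z z')).toReal from rfl]
  rw [← h1]
  exact pmf_sum_one _ _ (support_subset_Eset Act Ptil hsupp hcons pol hpol z)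

lemma sum_trans_mean (Act : (Fin M → ℕ) → Set A) (Ptil : A → PMF (Fin M → ℤ))
    (hsupp : QueueSupport M Ptil) (hcons : StateConsistent M Ptil Act)
    (pol : (Fin M → ℕ) → A) (hpol : ∀ z, pol z ∈ Act z)
    (α : Fin M → ℝ) (hdrift : ∀ a : A, ∑ k, α k * drift M Ptil a k = 0) (z : Fin M → ℕ) :
    ∑ z' ∈ Sset M z, fval α z' * hcqnTrans M Ptil pol z z' = fval α z := by
  classical
  have hinj : ∀ x ∈ Sset M z, ∀ y ∈ Sset M z, phiz z x = phiz z y → x = y :=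
    fun x _ y _ h => phiz_inj z h
  have hzero : ∑ z' ∈ Sset M z, gval α (phiz z z') * hcqnTrans M Ptil pol z z' = 0 := by
    have h1 : ∑ e ∈ (Sset M z).image (phiz z), gval α e * ((Ptil (pol z)) e).toReal
        = ∑ z' ∈ Sset M z, gval α (phiz z z') * ((Ptil (pol z)) (phiz z z')).toReal :=
      Finset.sum_image hinj
    have h2 : ∑ e ∈ (Sset M z).image (phiz z), gval α e * ((Ptil (pol z)) e).toReal
        = ∑ d ∈ Dset M, gval α d * ((Ptil (pol z)) d).toReal :=
      pmf_sum_congr _ _ _ _ (support_subset_Eset Act Ptil hsupp hcons pol hpol z)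
        (support_subset_Dset Ptil hsupp (pol z))
    calc ∑ z' ∈ Sset M z, gval α (phiz z z') * hcqnTrans M Ptil pol z z'
        = ∑ e ∈ (Sset M z).image (phiz z), gval α e * ((Ptil (pol z)) e).toReal := h1.symm
      _ = ∑ d ∈ Dset M, gval α d * ((Ptil (pol z)) d).toReal := h2
      _ = ∑ k, α k * drift M Ptil (pol z) k := drift_sum Ptil hsupp α (pol z)
      _ = 0 := hdrift (pol z)
  have hfv : ∀ z', fval α z' = fval α z + gval α (phiz z z') := by
    intro z'
    have h := fval_sub α z z'
    have h2 : gval α (fun k => (z' k : ℤ) - (z k : ℤ)) = gval α (phiz z z') := rfl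
    linarith [h, h2]
  calc ∑ z' ∈ Sset M z, fval α z' * hcqnTrans M Ptil pol z z'
      = ∑ z' ∈ Sset M z, (fval α z * hcqnTrans M Ptil pol z z'
          + gval α (phiz z z') * hcqnTrans M Ptil pol z z') := by
        refine Finset.sum_congr rfl fun z' _ => ?_
        rw [hfv z']; ring
    _ = fval α z * ∑ z' ∈ Sset M z, hcqnTrans M Ptil pol z z'
          + ∑ z' ∈ Sset M z, gval α (phiz z z') * hcqnTrans M Ptil pol z z' := by
        rw [Finset.sum_add_distrib, Finset.mul_sum]
    _ = fval α z := by
        rw [sum_trans_one Act Ptil hsupp hcons pol hpol z, hzero]; ring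

end HCQN


-- #### Layer 3 : stopping index and hitting time
namespace HCQN
open scoped Classical

variable {Ω S : Type*}

noncomputable def stopIdx (X : ℕ → Ω → S) (y : S) : ℕ → Ω → ℕ
  | 0, _ => 0
  | n+1, ω => if X (stopIdx X y n ω) ω = y then stopIdx X y n ω else n+1

lemma stopIdx_le (X : ℕ → Ω → S) (y : S) (n : ℕ) (ω : Ω) : stopIdx X y n ω ≤ n := by
  induction n with
  | zero => simp [stopIdx]
  | succ n ih =>
    rw [stopIdx]
    split
    · omega
    · omega

lemma stopIdx_succ_of_hit {X : ℕ → Ω → S} {y : S} {n : ℕ} {ω : Ω}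
    (h : X (stopIdx X y n ω) ω = y) : stopIdx X y (n+1) ω = stopIdx X y n ω := by
  rw [stopIdx, if_pos h]

lemma stopIdx_succ_of_not {X : ℕ → Ω → S} {y : S} {n : ℕ} {ω : Ω}
    (h : ¬ X (stopIdx X y n ω) ω = y) : stopIdx X y (n+1) ω = n + 1 := by
  rw [stopIdx, if_neg h]

lemma stopIdx_eq_self_of_not_hit {X : ℕ → Ω → S} {y : S} {n : ℕ} {ω : Ω}
    (h : ∀ k ≤ n, X k ω ≠ y) : stopIdx X y n ω = n := by
  induction n with
  | zero => rfl
  | succ n ih =>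
    have hn : stopIdx X y n ω = n := ih (fun k hk => h k (le_trans hk (Nat.le_succ n)))
    have : ¬ X (stopIdx X y n ω) ω = y := by rw [hn]; exact h n (Nat.le_succ n)
    rw [stopIdx_succ_of_not this]

lemma stopIdx_hit {X : ℕ → Ω → S} {y : S} {n : ℕ} {ω : Ω}
    (h : ∃ k ≤ n, X k ω = y) : X (stopIdx X y n ω) ω = y := by
  induction n with
  | zero =>
    obtain ⟨k, hk, hky⟩ := h
    interval_cases k
    simpa [stopIdx] using hky
  | succ n ih =>
    by_cases h' : ∃ k ≤ n, X k ω = y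
    · rw [stopIdx_succ_of_hit (ih h')]; exact ih h'
    · push_neg at h'
      obtain ⟨k, hk, hky⟩ := h
      have hk1 : k = n + 1 := by
        rcases Nat.lt_or_ge k (n+1) with h1 | h1
        · exact absurd hky (h' k (Nat.lt_succ_iff.1 h1))
        · omega
      subst hk1
      have hn : stopIdx X y n ω = n := stopIdx_eq_self_of_not_hit h'
      have : ¬ X (stopIdx X y n ω) ω = y := by rw [hn]; exact h' n le_rfl
      rw [stopIdx_succ_of_not this]
      exact hky

lemma stopIdx_diff (X : ℕ → Ω → S) (y : S) (f : S → ℝ) (n : ℕ) (ω : Ω) :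
    f (X (stopIdx X y (n+1) ω) ω) - f (X (stopIdx X y n ω) ω) =
      if ∃ k ≤ n, X k ω = y then 0 else f (X (n+1) ω) - f (X n ω) := by
  by_cases h : ∃ k ≤ n, X k ω = y
  · rw [if_pos h, stopIdx_succ_of_hit (stopIdx_hit h)]; ring
  · push_neg at h
    rw [if_neg (by push_neg; exact h)]
    have hn : stopIdx X y n ω = n := stopIdx_eq_self_of_not_hit h
    have : ¬ X (stopIdx X y n ω) ω = y := by rw [hn]; exact h n le_rfl
    rw [stopIdx_succ_of_not this, hn]

lemma hitTime_eq_iInf (X : ℕ → Ω → S) (y : S) (ω : Ω) :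
    hitTime X y ω = ⨅ n : ℕ, (if X n ω = y then (n : ℝ≥0∞) else ⊤) := by
  apply le_antisymm
  · refine le_iInf fun n => ?_
    by_cases h : X n ω = y
    · rw [if_pos h]; exact sInf_le ⟨n, h, rfl⟩
    · rw [if_neg h]; exact le_top
  · refine le_sInf fun t ht => ?_
    obtain ⟨n, hn, rfl⟩ := ht
    exact le_trans (iInf_le _ n) (by rw [if_pos hn])

lemma lt_hitTime_iff (X : ℕ → Ω → S) (y : S) (n : ℕ) (ω : Ω) :
    (n : ℝ≥0∞) < hitTime X y ω ↔ ∀ k ≤ n, X k ω ≠ y := by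
  constructor
  · intro h k hk hky
    have h1 : hitTime X y ω ≤ k := sInf_le ⟨k, hky, rfl⟩
    have h2 : (k : ℝ≥0∞) ≤ n := by exact_mod_cast hk
    exact absurd (lt_of_le_of_lt (h1.trans h2) h) (lt_irrefl _)
  · intro h
    have hb : ((n+1 : ℕ) : ℝ≥0∞) ≤ hitTime X y ω := by
      refine le_sInf fun t ht => ?_
      obtain ⟨m, hm, rfl⟩ := ht
      have : n + 1 ≤ m := by by_contra hc; exact h m (by omega) hm
      exact_mod_cast this
    calc (n : ℝ≥0∞) < ((n+1 : ℕ) : ℝ≥0∞) := by exact_mod_cast Nat.lt_succ_self n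
      _ ≤ _ := hb

lemma hitTime_eq_top {X : ℕ → Ω → S} {y : S} {ω : Ω} (h : ∀ n, X n ω ≠ y) :
    hitTime X y ω = ⊤ := by
  have : {t : ℝ≥0∞ | ∃ n : ℕ, X n ω = y ∧ (n : ℝ≥0∞) = t} = ∅ := by
    ext t; simp only [Set.mem_setOf_eq, Set.mem_empty_iff_false, iff_false]
    rintro ⟨n, hn, _⟩; exact h n hn
  rw [hitTime, this, sInf_empty]

end HCQN

/-- General non-stabilizability criterion, hitting-time form: if `α ≠ 0` is orthogonal to
the drift of every action, then for every policy, every realization of the induced chain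
started at `x`, and every state `y` with `α ⬝ x ≠ α ⬝ y`, the hitting time of `y` has
infinite expectation. -/
theorem hcqn_hitting_time_infinite (M : ℕ) (hM : 1 ≤ M)
    (A : Type) [Fintype A] [Nonempty A]
    (Ptil : A → PMF (Fin M → ℤ)) (hsupp : QueueSupport M Ptil)
    (Act : (Fin M → ℕ) → Set A) (hnonempty : ∀ z, (Act z).Nonempty)
    (hcons : StateConsistent M Ptil Act)
    (α : Fin M → ℝ) (hα : α ≠ 0)
    (hdrift : ∀ a : A, ∑ k, α k * drift M Ptil a k = 0)
    (pol : (Fin M → ℕ) → A) (hpol : ∀ z, pol z ∈ Act z)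
    {Ω : Type} {mΩ : MeasurableSpace Ω} (μ : Measure Ω) [IsProbabilityMeasure μ]
    (ℱ : Filtration ℕ mΩ) (X : ℕ → Ω → (Fin M → ℕ))
    (x : Fin M → ℕ) (hX0 : ∀ᵐ ω ∂μ, X 0 ω = x)
    (hX : IsRealization μ ℱ X (hcqnTrans M Ptil pol))
    (y : Fin M → ℕ) (hxy : ∑ k, α k * (x k : ℝ) ≠ ∑ k, α k * (y k : ℝ)) :
    ∫⁻ ω, hitTime X y ω ∂μ = ⊤ := by
  classical
  by_contra hfin
  obtain ⟨hadapt, hcond⟩ := hX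
  set f : (Fin M → ℕ) → ℝ := HCQN.fval α with hfdef
  set p : (Fin M → ℕ) → (Fin M → ℕ) → ℝ := hcqnTrans M Ptil pol with hpdef
  -- basic measurability
  have hXm : ∀ n, Measurable (X n) := fun n => (hadapt n).mono (ℱ.le n) le_rfl
  have hBmeas : ∀ (n : ℕ) (z : Fin M → ℕ), MeasurableSet {ω | X n ω = z} := by
    intro n z
    exact hXm n (measurableSet_singleton z)
  have hBmeasF : ∀ (n : ℕ) (z : Fin M → ℕ), MeasurableSet[ℱ n] {ω | X n ω = z} := by
    intro n z
    exact hadapt n (measurableSet_singleton z)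
  set Hev : ℕ → Set Ω := fun n => {ω | ∃ k ≤ n, X k ω = y} with hHevdef
  have hHevF : ∀ n, MeasurableSet[ℱ n] (Hev n) := by
    intro n
    have hrw : Hev n = ⋃ k : ℕ, ⋃ (_ : k ≤ n), {ω | X k ω = y} := by
      ext ω; simp [hHevdef]
    rw [hrw]
    refine MeasurableSet.iUnion fun k => MeasurableSet.iUnion fun hk => ?_
    exact (ℱ.mono hk) _ (hBmeasF k y)
  have hHevM : ∀ n, MeasurableSet (Hev n) := fun n => (ℱ.le n) _ (hHevF n)
  -- the basic conditional-probability computation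
  have L1 : ∀ (n : ℕ) (z z' : Fin M → ℕ) (Aset : Set Ω), MeasurableSet[ℱ n] Aset →
      (∀ ω ∈ Aset, X n ω = z) →
      (μ (Aset ∩ {ω | X (n+1) ω = z'})).toReal = p z z' * (μ Aset).toReal := by
    intro n z z' Aset hAF hAsub
    have hAM : MeasurableSet Aset := (ℱ.le n) _ hAF
    have hBM : MeasurableSet {ω' | X (n+1) ω' = z'} := hBmeas (n+1) z'
    set ind := Set.indicator {ω' | X (n + 1) ω' = z'} (fun _ => (1 : ℝ)) with hinddef
    have hint : Integrable ind μ := (integrable_const 1).indicator hBM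
    have h1 : ∫ w in Aset, (μ[ind|ℱ n]) w ∂μ = ∫ w in Aset, ind w ∂μ :=
      setIntegral_condExp (ℱ.le n) hint hAF
    have h2 : ∫ w in Aset, (μ[ind|ℱ n]) w ∂μ = ∫ w in Aset, (fun _ => p z z') w ∂μ := by
      refine setIntegral_congr_ae hAM ?_
      filter_upwards [hcond n z z'] with ω hω hmem
      exact hω (hAsub ω hmem)
    have h3 : ∫ w in Aset, ind w ∂μ = (μ (Aset ∩ {ω' | X (n+1) ω' = z'})).toReal := by
      rw [hinddef, integral_indicator hBM]
      simp [Measure.real, Measure.restrict_apply hBM, Set.inter_comm]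
    have h4 : ∫ w in Aset, (fun _ => p z z') w ∂μ = p z z' * (μ Aset).toReal := by
      rw [setIntegral_const]
      simp [Measure.real, smul_eq_mul, mul_comm]
    rw [← h3, h1.symm.trans h2, h4]
  -- almost surely, every transition has positive probability
  have hgood : ∀ᵐ ω ∂μ, X 0 ω = x ∧ ∀ n, p (X n ω) (X (n+1) ω) ≠ 0 := by
    refine hX0.and ?_
    rw [ae_all_iff]
    intro n
    rw [ae_iff]
    have hz : ∀ z : Fin M → ℕ, μ ({ω | X n ω = z} ∩ {ω | p z (X (n+1) ω) = 0}) = 0 := by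
      intro z
      have hsub : {ω | X n ω = z} ∩ {ω | p z (X (n+1) ω) = 0}
          ⊆ ⋃ z' : {v : Fin M → ℕ // p z v = 0},
              ({ω | X n ω = z} ∩ {ω | X (n+1) ω = z'.1}) := by
        rintro ω ⟨h1, h2⟩
        exact Set.mem_iUnion.2 ⟨⟨X (n+1) ω, h2⟩, h1, rfl⟩
      refine measure_mono_null hsub (measure_iUnion_null fun z' => ?_)
      have hL := L1 n z z'.1 {ω | X n ω = z} (hBmeasF n z) (fun ω h => h)
      rw [z'.2, zero_mul] at hL
      rcases (ENNReal.toReal_eq_zero_iff _).1 hL with h | h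
      · exact h
      · exact absurd h (measure_ne_top μ _)
    have hsub2 : {ω | ¬ p (X n ω) (X (n+1) ω) ≠ 0}
        ⊆ ⋃ z : Fin M → ℕ, ({ω | X n ω = z} ∩ {ω | p z (X (n+1) ω) = 0}) := by
      intro ω hω
      simp only [Set.mem_setOf_eq, not_not] at hω
      exact Set.mem_iUnion.2 ⟨X n ω, rfl, hω⟩
    exact measure_mono_null hsub2 (measure_iUnion_null hz)
  -- step bound constants
  set C : ℝ := ∑ d ∈ HCQN.Dset M, |HCQN.gval α d| with hCdef
  have hC0 : 0 ≤ C := Finset.sum_nonneg fun d _ => abs_nonneg _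
  have hstep : ∀ ω, (∀ n, p (X n ω) (X (n+1) ω) ≠ 0) → ∀ n,
      |f (X (n+1) ω) - f (X n ω)| ≤ C ∧ X (n+1) ω ∈ HCQN.Sset M (X n ω) := by
    intro ω hω n
    obtain ⟨hsup, hmem⟩ :=
      HCQN.mem_Sset_of_trans_ne Ptil hsupp pol (X n ω) (X (n+1) ω) (hω n)
    refine ⟨?_, hmem⟩
    have heq : f (X (n+1) ω) - f (X n ω) = HCQN.gval α (HCQN.phiz (X n ω) (X (n+1) ω)) :=
      HCQN.fval_sub α (X n ω) (X (n+1) ω)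
    rw [heq]
    have hD : HCQN.phiz (X n ω) (X (n+1) ω) ∈ HCQN.Dset M :=
      Finset.mem_coe.1 (HCQN.support_subset_Dset Ptil hsupp (pol (X n ω)) hsup)
    calc |HCQN.gval α (HCQN.phiz (X n ω) (X (n+1) ω))|
        ≤ ∑ d ∈ HCQN.Dset M, |HCQN.gval α d| :=
          Finset.single_le_sum (f := fun d => |HCQN.gval α d|) (fun d _ => abs_nonneg _) hD
      _ = C := hCdef.symm
  have hpath : ∀ ω, X 0 ω = x → (∀ n, p (X n ω) (X (n+1) ω) ≠ 0) →
      ∀ n, |f (X n ω) - f x| ≤ C * n := by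
    intro ω h0 hω n
    induction n with
    | zero => simp [h0]
    | succ n ih =>
      have h1 := (hstep ω hω n).1
      push_cast
      calc |f (X (n+1) ω) - f x|
          ≤ |f (X (n+1) ω) - f (X n ω)| + |f (X n ω) - f x| := abs_sub_le _ _ _
        _ ≤ C + C * n := add_le_add h1 ih
        _ = C * (n + 1) := by ring
      -- cast
  -- stopped process
  set φ : ℕ → Ω → ℝ := fun n ω => f (X (HCQN.stopIdx X y n ω) ω) with hφdef
  have hstopM : ∀ n, Measurable (fun ω => HCQN.stopIdx X y n ω) := by
    intro n
    induction n with
    | zero =>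
      have : (fun ω => HCQN.stopIdx X y 0 ω) = fun _ => 0 := by
        funext ω; rfl
      rw [this]; exact measurable_const
    | succ n ih =>
      have hcset : MeasurableSet {ω | X (HCQN.stopIdx X y n ω) ω = y} := by
        have hrw : {ω | X (HCQN.stopIdx X y n ω) ω = y} =
            ⋃ j : ℕ, ({ω | HCQN.stopIdx X y n ω = j} ∩ {ω | X j ω = y}) := by
          ext ω
          constructor
          · intro h
            exact Set.mem_iUnion.2 ⟨HCQN.stopIdx X y n ω, rfl, h⟩
          · intro h
            obtain ⟨j, h1, h2⟩ := Set.mem_iUnion.1 h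
            simp only [Set.mem_setOf_eq] at h1 h2 ⊢
            rw [h1]; exact h2
        rw [hrw]
        exact MeasurableSet.iUnion fun j =>
          (ih (measurableSet_singleton j)).inter (hBmeas j y)
      have hrw2 : (fun ω => HCQN.stopIdx X y (n+1) ω) =
          Set.piecewise {ω | X (HCQN.stopIdx X y n ω) ω = y}
            (fun ω => HCQN.stopIdx X y n ω) (fun _ => n+1) := by
        funext ω
        by_cases h : X (HCQN.stopIdx X y n ω) ω = y
        · rw [HCQN.stopIdx_succ_of_hit h]
          exact (Set.piecewise_eq_of_mem {ω | X (HCQN.stopIdx X y n ω) ω = y}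
            (fun ω => HCQN.stopIdx X y n ω) (fun _ => n+1) h).symm
        · rw [HCQN.stopIdx_succ_of_not h]
          exact (Set.piecewise_eq_of_notMem {ω | X (HCQN.stopIdx X y n ω) ω = y}
            (fun ω => HCQN.stopIdx X y n ω) (fun _ => n+1) h).symm
      rw [hrw2]
      exact Measurable.piecewise hcset ih measurable_const
  have hφm : ∀ n, Measurable (φ n) := by
    intro n
    have hrw : φ n = fun ω => ∑ j ∈ Finset.range (n+1),
        Set.indicator {ω' | HCQN.stopIdx X y n ω' = j} (fun ω' => f (X j ω')) ω := by
      funext ω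
      rw [Finset.sum_eq_single_of_mem (HCQN.stopIdx X y n ω)
        (Finset.mem_range.2 (Nat.lt_succ_of_le (HCQN.stopIdx_le X y n ω)))]
      · rw [Set.indicator_of_mem
            (show ω ∈ {ω' | HCQN.stopIdx X y n ω' = HCQN.stopIdx X y n ω} from rfl)]
      · intro j hj hne
        refine Set.indicator_of_notMem ?_ _
        intro hmem
        exact hne (show HCQN.stopIdx X y n ω = j from hmem).symm
    rw [hrw]
    refine Finset.measurable_sum _ fun j _ => ?_
    exact Measurable.indicator ((measurable_of_countable f).comp (hXm j))
      (hstopM n (measurableSet_singleton j))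
  have hψm : ∀ n, Measurable (fun ω => f (X n ω)) := fun n =>
    (measurable_of_countable f).comp (hXm n)
  -- integrability
  have hφbd : ∀ n, ∀ᵐ ω ∂μ, ‖φ n ω‖ ≤ |f x| + C * n := by
    intro n
    filter_upwards [hgood] with ω hg
    rcases hg with ⟨h0, hω⟩
    have hj := HCQN.stopIdx_le X y n ω
    have hb := hpath ω h0 hω (HCQN.stopIdx X y n ω)
    have hb2 : C * (HCQN.stopIdx X y n ω : ℝ) ≤ C * n := by
      have : ((HCQN.stopIdx X y n ω : ℕ) : ℝ) ≤ (n : ℝ) := by exact_mod_cast hj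
      exact mul_le_mul_of_nonneg_left this hC0
    have : |φ n ω| ≤ |f x| + C * n := by
      have h3 : |φ n ω - f x| ≤ C * n := le_trans hb hb2
      calc |φ n ω| = |(φ n ω - f x) + f x| := by ring_nf
        _ ≤ |φ n ω - f x| + |f x| := abs_add_le _ _
        _ ≤ C * n + |f x| := add_le_add h3 le_rfl
        _ = |f x| + C * n := by ring
    simpa [Real.norm_eq_abs] using this
  have hφint : ∀ n, Integrable (φ n) μ := fun n =>
    Integrable.mono' (integrable_const (|f x| + C * n))
      (hφm n).aestronglyMeasurable (hφbd n)
  have hψbd : ∀ n, ∀ᵐ ω ∂μ, ‖f (X n ω)‖ ≤ |f x| + C * n := by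
    intro n
    filter_upwards [hgood] with ω hg
    rcases hg with ⟨h0, hω⟩
    have hb := hpath ω h0 hω n
    have : |f (X n ω)| ≤ |f x| + C * n := by
      calc |f (X n ω)| = |(f (X n ω) - f x) + f x| := by ring_nf
        _ ≤ |f (X n ω) - f x| + |f x| := abs_add_le _ _
        _ ≤ C * n + |f x| := add_le_add hb le_rfl
        _ = |f x| + C * n := by ring
    simpa [Real.norm_eq_abs] using this
  have hψint : ∀ n, Integrable (fun ω => f (X n ω)) μ := fun n =>
    Integrable.mono' (integrable_const (|f x| + C * n))
      (hψm n).aestronglyMeasurable (hψbd n)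
  -- the martingale property of the stopped process
  have hmart : ∀ n, ∫ ω, φ (n+1) ω ∂μ = ∫ ω, φ n ω ∂μ := by
    intro n
    have hdiff : ∀ ω, φ (n+1) ω - φ n ω =
        Set.indicator ((Hev n)ᶜ) (fun ω => f (X (n+1) ω) - f (X n ω)) ω := by
      intro ω
      have h := HCQN.stopIdx_diff X y f n ω
      by_cases hh : ∃ k ≤ n, X k ω = y
      · rw [Set.indicator_of_notMem (by simpa [hHevdef] using hh)]
        simpa [hφdef, if_pos hh] using h
      · rw [Set.indicator_of_mem (by simpa [hHevdef] using hh)]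
        simpa [hφdef, if_neg hh] using h
    have hAzF : ∀ z : Fin M → ℕ, MeasurableSet[ℱ n] ((Hev n)ᶜ ∩ {ω | X n ω = z}) :=
      fun z => ((hHevF n).compl).inter (hBmeasF n z)
    have hAzM : ∀ z : Fin M → ℕ, MeasurableSet ((Hev n)ᶜ ∩ {ω | X n ω = z}) :=
      fun z => (ℱ.le n) _ (hAzF z)
    have hdint : Integrable (fun ω => f (X (n+1) ω) - f (X n ω)) μ :=
      (hψint (n+1)).sub (hψint n)
    have hU : (Hev n)ᶜ = ⋃ z : Fin M → ℕ, ((Hev n)ᶜ ∩ {ω | X n ω = z}) := by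
      ext ω
      simp only [Set.mem_iUnion, Set.mem_inter_iff, Set.mem_setOf_eq]
      constructor
      · intro h; exact ⟨X n ω, h, rfl⟩
      · rintro ⟨z, h, _⟩; exact h
    have hdisj : Pairwise (Function.onFun Disjoint
        (fun z : Fin M → ℕ => (Hev n)ᶜ ∩ {ω | X n ω = z})) := by
      intro z1 z2 hne
      refine Set.disjoint_left.2 ?_
      rintro ω ⟨_, h1⟩ ⟨_, h2⟩
      exact hne (h1.symm.trans h2)
    have hzero : ∀ z : Fin M → ℕ,
        ∫ ω in ((Hev n)ᶜ ∩ {ω | X n ω = z}), (f (X (n+1) ω) - f (X n ω)) ∂μ = 0 := by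
      intro z
      set Az := (Hev n)ᶜ ∩ {ω | X n ω = z} with hAzdef
      have hAzMz : MeasurableSet Az := hAzM z
      have hsubz : ∀ ω ∈ Az, X n ω = z := fun ω h => h.2
      have e1 : ∫ ω in Az, f (X n ω) ∂μ = f z * (μ Az).toReal := by
        rw [setIntegral_congr_ae hAzMz
          (ae_of_all _ (fun ω (hω : ω ∈ Az) => by rw [hsubz ω hω]) :
            ∀ᵐ ω ∂μ, ω ∈ Az → f (X n ω) = (fun _ => f z) ω)]
        rw [setIntegral_const]
        simp [Measure.real, smul_eq_mul, mul_comm]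
      have e2 : ∫ ω in Az, f (X (n+1) ω) ∂μ = f z * (μ Az).toReal := by
        have hae : ∀ᵐ ω ∂μ, ω ∈ Az → f (X (n+1) ω) =
            (fun ω' => ∑ z' ∈ HCQN.Sset M z,
              Set.indicator {ω'' | X (n+1) ω'' = z'} (fun _ => f z') ω') ω := by
          filter_upwards [hgood] with ω hg hmem
          rcases hg with ⟨_, hω⟩
          have hm : X (n+1) ω ∈ HCQN.Sset M z := by
            have := (hstep ω hω n).2
            rwa [hsubz ω hmem] at this
          rw [Finset.sum_eq_single_of_mem (X (n+1) ω) hm]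
          · rw [Set.indicator_of_mem
                (show ω ∈ {ω'' | X (n+1) ω'' = X (n+1) ω} from rfl)]
          · intro z' hz' hne
            refine Set.indicator_of_notMem ?_ _
            intro hmem2
            exact hne (show X (n+1) ω = z' from hmem2).symm
        rw [setIntegral_congr_ae hAzMz hae]
        rw [integral_finset_sum _ (fun z' _ =>
          (((integrable_const (f z')).indicator (hBmeas (n+1) z')).integrableOn))]
        have e3 : ∀ z' ∈ HCQN.Sset M z,
            ∫ ω in Az, Set.indicator {ω'' | X (n+1) ω'' = z'} (fun _ => f z') ω ∂μ
              = f z' * (p z z' * (μ Az).toReal) := by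
          intro z' _
          rw [integral_indicator (hBmeas (n+1) z')]
          rw [Measure.restrict_restrict (hBmeas (n+1) z')]
          rw [setIntegral_const]
          rw [Set.inter_comm, smul_eq_mul, mul_comm]
          rw [measureReal_def, L1 n z z' Az (hAzF z) hsubz]
        rw [Finset.sum_congr rfl e3]
        have := HCQN.sum_trans_mean Act Ptil hsupp hcons pol hpol α hdrift z
        calc ∑ z' ∈ HCQN.Sset M z, f z' * (p z z' * (μ Az).toReal)
            = (∑ z' ∈ HCQN.Sset M z, f z' * p z z') * (μ Az).toReal := by
              rw [Finset.sum_mul]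
              exact Finset.sum_congr rfl fun z' _ => by ring
          _ = f z * (μ Az).toReal := by rw [this]
      rw [integral_sub ((hψint (n+1)).integrableOn) ((hψint n).integrableOn), e1, e2]
      ring
    have hint2 : ∫ ω, (φ (n+1) ω - φ n ω) ∂μ = 0 := by
      calc ∫ ω, (φ (n+1) ω - φ n ω) ∂μ
          = ∫ ω, Set.indicator ((Hev n)ᶜ) (fun ω => f (X (n+1) ω) - f (X n ω)) ω ∂μ := by
            exact integral_congr_ae (ae_of_all _ hdiff)
        _ = ∫ ω in (Hev n)ᶜ, (f (X (n+1) ω) - f (X n ω)) ∂μ := by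
            rw [integral_indicator (hHevM n).compl]
        _ = ∑' z : Fin M → ℕ,
              ∫ ω in ((Hev n)ᶜ ∩ {ω | X n ω = z}), (f (X (n+1) ω) - f (X n ω)) ∂μ := by
            conv_lhs => rw [hU]
            exact integral_iUnion hAzM hdisj hdint.integrableOn
        _ = 0 := by
            rw [tsum_congr hzero]
            exact tsum_zero
    have := integral_sub (hφint (n+1)) (hφint n)
    rw [hint2] at this
    linarith [this.symm]
  have hF : ∀ n, ∫ ω, φ n ω ∂μ = f x := by
    intro n
    induction n with
    | zero =>
      have : ∫ ω, φ 0 ω ∂μ = ∫ ω, (fun _ => f x) ω ∂μ := by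
        refine integral_congr_ae ?_
        filter_upwards [hX0] with ω h0
        show f (X (HCQN.stopIdx X y 0 ω) ω) = f x
        have : HCQN.stopIdx X y 0 ω = 0 := rfl
        rw [this, h0]
      rw [this, integral_const]
      simp
    | succ n ih => rw [hmart n, ih]
  -- the key inequality
  set δ : ℝ := |f x - f y| with hδdef
  have hδpos : 0 < δ := by
    rw [hδdef, abs_pos, sub_ne_zero]
    exact hxy
  set r : ℕ → ℝ := fun n => (μ ((Hev n)ᶜ)).toReal with hrdef
  have hkey : ∀ n : ℕ, δ ≤ (C * n + δ) * r n := by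
    intro n
    have h1 : f x - f y = ∫ ω, (φ n ω - f y) ∂μ := by
      rw [integral_sub (hφint n) (integrable_const _), hF n, integral_const]
      simp
    have h2 : ∀ᵐ ω ∂μ, |φ n ω - f y| ≤
        Set.indicator ((Hev n)ᶜ) (fun _ => C * n + δ) ω := by
      filter_upwards [hgood] with ω hg
      rcases hg with ⟨h0, hω⟩
      by_cases h : ω ∈ Hev n
      · have hy : X (HCQN.stopIdx X y n ω) ω = y := HCQN.stopIdx_hit h
        rw [Set.indicator_of_notMem (by simpa using h)]
        have : φ n ω = f y := by rw [hφdef]; simp only; rw [hy]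
        rw [this]
        simp
      · rw [Set.indicator_of_mem (by simpa using h)]
        have hnot : ∀ k ≤ n, X k ω ≠ y := by
          intro k hk hky
          exact h ⟨k, hk, hky⟩
        have hst : HCQN.stopIdx X y n ω = n := HCQN.stopIdx_eq_self_of_not_hit hnot
        have : φ n ω = f (X n ω) := by rw [hφdef]; simp only; rw [hst]
        rw [this]
        calc |f (X n ω) - f y| ≤ |f (X n ω) - f x| + |f x - f y| := abs_sub_le _ _ _
          _ ≤ C * n + δ := add_le_add (hpath ω h0 hω n) le_rfl
    have h3 : Integrable (fun ω => |φ n ω - f y|) μ :=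
      ((hφint n).sub (integrable_const _)).abs
    have h4 : Integrable (Set.indicator ((Hev n)ᶜ) (fun _ => C * n + δ)) μ :=
      (integrable_const _).indicator (hHevM n).compl
    calc δ = |f x - f y| := rfl
      _ = |∫ ω, (φ n ω - f y) ∂μ| := by rw [← h1]
      _ ≤ ∫ ω, |φ n ω - f y| ∂μ := by
          simpa [Real.norm_eq_abs] using
            norm_integral_le_integral_norm (fun ω => φ n ω - f y) (μ := μ)
      _ ≤ ∫ ω, Set.indicator ((Hev n)ᶜ) (fun _ => C * n + δ) ω ∂μ :=
          integral_mono_ae h3 h4 h2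
      _ = (C * n + δ) * r n := by
          rw [integral_indicator (hHevM n).compl, setIntegral_const]
          simp [Measure.real, hrdef, smul_eq_mul, mul_comm]
  -- hitting time facts
  have hTmeas : Measurable (hitTime X y) := by
    have hTrw : hitTime X y = fun ω => ⨅ m : ℕ,
        Set.piecewise {ω' | X m ω' = y} (fun _ => (m : ℝ≥0∞)) (fun _ => ⊤) ω := by
      funext ω
      rw [HCQN.hitTime_eq_iInf X y ω]
      refine iInf_congr fun m => ?_
      by_cases h : X m ω = y
      · rw [if_pos h]
        exact (Set.piecewise_eq_of_mem {ω' | X m ω' = y}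
          (fun _ => (m : ℝ≥0∞)) (fun _ => ⊤) h).symm
      · rw [if_neg h]
        exact (Set.piecewise_eq_of_notMem {ω' | X m ω' = y}
          (fun _ => (m : ℝ≥0∞)) (fun _ => ⊤) h).symm
    rw [hTrw]
    exact Measurable.iInf fun m =>
      Measurable.piecewise (hBmeas m y) measurable_const measurable_const
  have hHc : ∀ n : ℕ, (Hev n)ᶜ = {ω | (n : ℝ≥0∞) < hitTime X y ω} := by
    intro n
    ext ω
    simp only [Set.mem_compl_iff, Set.mem_setOf_eq, hHevdef]
    rw [HCQN.lt_hitTime_iff X y n ω]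
    push_neg
    rfl
  -- finiteness consequences
  set T := hitTime X y with hTdef
  set E := ∫⁻ ω, T ω ∂μ with hEdef
  have hE : E ≠ ⊤ := hfin
  have hsM : ∀ n : ℕ, MeasurableSet {ω | (n : ℝ≥0∞) < T ω} :=
    fun n => hTmeas measurableSet_Ioi
  have htopM : MeasurableSet {ω | T ω = ⊤} := hTmeas (measurableSet_singleton ⊤)
  have htopnull : μ {ω | T ω = ⊤} = 0 := by
    by_contra h
    apply hE
    have h1 : ∫⁻ ω in {ω | T ω = ⊤}, T ω ∂μ ≤ E := setLIntegral_le_lintegral _ _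
    have h2 : ∫⁻ ω in {ω | T ω = ⊤}, T ω ∂μ = ⊤ := by
      have : ∫⁻ ω in {ω | T ω = ⊤}, T ω ∂μ = ∫⁻ _ in {ω | T ω = ⊤}, ⊤ ∂μ := by
        refine setLIntegral_congr_fun htopM (fun ω hω => hω)
      rw [this, setLIntegral_const]
      exact ENNReal.top_mul h
    exact top_le_iff.1 (h2 ▸ h1)
  have hInter : ⋂ n : ℕ, {ω | (n : ℝ≥0∞) < T ω} = {ω | T ω = ⊤} := by
    ext ω
    simp only [Set.mem_iInter, Set.mem_setOf_eq]
    constructor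
    · intro h
      have hnever : ∀ k, X k ω ≠ y := fun k =>
        (HCQN.lt_hitTime_iff X y k ω).1 (h k) k le_rfl
      exact HCQN.hitTime_eq_top hnever
    · intro h n
      rw [hTdef] at h ⊢
      rw [h]
      exact ENNReal.natCast_lt_top n  -- (n : ℝ≥0∞) < ⊤
  have hanti : Antitone (fun n : ℕ => {ω | (n : ℝ≥0∞) < T ω}) := by
    intro m n hmn ω hω
    simp only [Set.mem_setOf_eq] at hω ⊢
    exact lt_of_le_of_lt (by exact_mod_cast hmn) hω
  have htend : Filter.Tendsto (fun n : ℕ => μ {ω | (n : ℝ≥0∞) < T ω})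
      Filter.atTop (nhds 0) := by
    have h := MeasureTheory.tendsto_measure_iInter_atTop
      (fun n => (hsM n).nullMeasurableSet) hanti ⟨0, measure_ne_top μ _⟩
    rw [hInter, htopnull] at h
    exact h
  have hrtend : Filter.Tendsto r Filter.atTop (nhds 0) := by
    have h := (ENNReal.tendsto_toReal (by simp : (0:ℝ≥0∞) ≠ ⊤)).comp htend
    simp only [ENNReal.toReal_zero] at h
    have hreq : r = fun n : ℕ => (μ {ω | (n : ℝ≥0∞) < T ω}).toReal := by
      funext n; rw [hrdef]; simp only; rw [hHc n]
    rw [hreq]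
    exact h
  -- tail integral tends to zero
  set b : ℕ → ℝ≥0∞ := fun n => ∫⁻ ω in {ω | (n : ℝ≥0∞) < T ω}, T ω ∂μ with hbdef
  set a : ℕ → ℝ≥0∞ := fun n => ∫⁻ ω in {ω | (n : ℝ≥0∞) < T ω}ᶜ, T ω ∂μ with hadef
  have hab : ∀ n, b n + a n = E := fun n => lintegral_add_compl _ (hsM n)
  have hbE : ∀ n, b n ≤ E := fun n => le_trans le_self_add (le_of_eq (hab n))
  have haE : ∀ n, a n ≤ E := fun n => le_trans le_add_self (le_of_eq (hab n))
  have ha_tend : Filter.Tendsto a Filter.atTop (nhds E) := by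
    have hgm : ∀ n : ℕ, Measurable (Set.indicator ({ω | (n : ℝ≥0∞) < T ω}ᶜ) T) :=
      fun n => hTmeas.indicator (hsM n).compl
    have hgmono : Monotone (fun n : ℕ => Set.indicator ({ω | (n : ℝ≥0∞) < T ω}ᶜ) T) := by
      intro m n hmn ω
      show Set.indicator ({ω | (m : ℝ≥0∞) < T ω}ᶜ) T ω ≤
        Set.indicator ({ω | (n : ℝ≥0∞) < T ω}ᶜ) T ω
      by_cases h : ω ∈ {ω | (m : ℝ≥0∞) < T ω}ᶜ
      · rw [Set.indicator_of_mem h, Set.indicator_of_mem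
          (Set.compl_subset_compl.2 (hanti hmn) h)]
      · rw [Set.indicator_of_notMem h]
        exact zero_le
    have hsup : (fun ω => ⨆ n : ℕ, Set.indicator ({ω | (n : ℝ≥0∞) < T ω}ᶜ) T ω)
        =ᵐ[μ] T := by
      have haene : ∀ᵐ ω ∂μ, T ω ≠ ⊤ := by
        rw [ae_iff]
        simpa only [not_not] using htopnull
      filter_upwards [haene] with ω hω
      obtain ⟨m, hm⟩ := ENNReal.exists_nat_gt hω
      apply le_antisymm
      · exact iSup_le fun n => Set.indicator_le_self _ _ ω
      · refine le_iSup_of_le m ?_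
        rw [Set.indicator_of_mem]
        simp only [Set.mem_compl_iff, Set.mem_setOf_eq, not_lt]
        exact le_of_lt hm
    have hmct := lintegral_iSup (μ := μ) hgm hgmono
    have heq : ∫⁻ ω, ⨆ n : ℕ, Set.indicator ({ω | (n : ℝ≥0∞) < T ω}ᶜ) T ω ∂μ = E := by
      rw [lintegral_congr_ae hsup]
    have ha_eq : ∀ n, a n = ∫⁻ ω, Set.indicator ({ω | (n : ℝ≥0∞) < T ω}ᶜ) T ω ∂μ := by
      intro n
      rw [hadef]
      simp only
      rw [lintegral_indicator (hsM n).compl]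
    have hsup2 : ⨆ n, a n = E := by
      calc ⨆ n, a n
          = ⨆ n : ℕ, ∫⁻ ω, Set.indicator ({ω | (n : ℝ≥0∞) < T ω}ᶜ) T ω ∂μ :=
            iSup_congr ha_eq
        _ = ∫⁻ ω, ⨆ n : ℕ, Set.indicator ({ω | (n : ℝ≥0∞) < T ω}ᶜ) T ω ∂μ := hmct.symm
        _ = E := heq
    rw [← hsup2]
    refine tendsto_atTop_iSup ?_
    intro m n hmn
    rw [ha_eq m, ha_eq n]
    exact lintegral_mono (hgmono hmn)
  have hbreal : ∀ n, (b n).toReal = E.toReal - (a n).toReal := by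
    intro n
    have hb_eq : b n = E - a n := by
      have := hab n
      rw [← this]
      rw [ENNReal.add_sub_cancel_right (ne_top_of_le_ne_top hE (haE n))]
    rw [hb_eq, ENNReal.toReal_sub_of_le (haE n) hE]
  have hbtend : Filter.Tendsto (fun n => (b n).toReal) Filter.atTop (nhds 0) := by
    have h1 : Filter.Tendsto (fun n => (a n).toReal) Filter.atTop (nhds E.toReal) := by
      exact (ENNReal.tendsto_toReal hE).comp ha_tend
    have h2 := h1.const_sub E.toReal
    simp only [sub_self] at h2
    exact h2.congr fun n => (hbreal n).symm
  -- n * r n ≤ (b n).toReal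
  have hnr : ∀ n : ℕ, (n : ℝ) * r n ≤ (b n).toReal := by
    intro n
    have h1 : (n : ℝ≥0∞) * μ {ω | (n : ℝ≥0∞) < T ω} ≤ b n := by
      rw [hbdef]
      simp only
      rw [← setLIntegral_const {ω | (n : ℝ≥0∞) < T ω} (n : ℝ≥0∞)]
      exact setLIntegral_mono hTmeas fun ω hω => le_of_lt hω
    have h2 : ((n : ℝ≥0∞) * μ {ω | (n : ℝ≥0∞) < T ω}).toReal = (n : ℝ) * r n := by
      rw [ENNReal.toReal_mul, ENNReal.toReal_natCast]
      have hrn : r n = (μ {ω | (n : ℝ≥0∞) < T ω}).toReal := by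
        rw [hrdef]; simp only; rw [hHc n]
      rw [hrn]
    rw [← h2]
    exact ENNReal.toReal_mono (ne_top_of_le_ne_top hE (hbE n)) h1
  -- conclusion
  have hub : ∀ n : ℕ, δ ≤ C * (b n).toReal + δ * r n := by
    intro n
    have hr0 : 0 ≤ r n := ENNReal.toReal_nonneg
    calc δ ≤ (C * n + δ) * r n := hkey n
      _ = C * ((n : ℝ) * r n) + δ * r n := by ring
      _ ≤ C * (b n).toReal + δ * r n := by
          have := mul_le_mul_of_nonneg_left (hnr n) hC0
          linarith
  have hlim : Filter.Tendsto (fun n => C * (b n).toReal + δ * r n)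
      Filter.atTop (nhds 0) := by
    have h1 := hbtend.const_mul C
    have h2 := hrtend.const_mul δ
    have h3 := h1.add h2
    norm_num at h3
    exact h3
  have : δ ≤ 0 := ge_of_tendsto hlim (Filter.Eventually.of_forall hub)
  linarith
end

section
/- For the critical push-pull ring with an even number M of servers, the vector α ∈ ℝ^M with entries α_j = (−1)^{j+1}·λ_j^{−1} (that is, α = (+λ_1^{−1}, −λ_2^{−1}, +λ_3^{−1}, …, −λ_M^{−1})) satisfies D·α = 0, i.e., α is orthogonal to the drift Δ(u) of every action u ∈ {push,pull}^M. -/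
open MeasureTheory
open scoped ENNReal

/-- Unnormalized drift row `d(u)` of action `u` in the push-pull ring with push rates
`lam` and pull rates `mu` (`true` = push, `false` = pull). Entry `j` is: `λⱼ` if servers
`j` and `j+1` both push; `λⱼ - μⱼ` if server `j` pushes and server `j+1` pulls; `0` if
server `j` pulls and server `j+1` pushes; `-μⱼ` if both pull. -/
def ringd (M : ℕ) [NeZero M] (lam mu : Fin M → ℝ) (u : Fin M → Bool) (j : Fin M) : ℝ :=
  if u j then (if u (j + 1) then lam j else lam j - mu j)
  else (if u (j + 1) then 0 else -mu j)

/-- The total rate `r(u) = ∑ⱼ (λⱼ if server j pushes, else μ_{j-1})` of action `u`. -/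
def ringr (M : ℕ) [NeZero M] (lam mu : Fin M → ℝ) (u : Fin M → Bool) : ℝ :=
  ∑ j : Fin M, if u j then lam j else mu (j - 1)

/-- The normalized drift `Δ(u) = d(u) / r(u)` of action `u`. -/
noncomputable def ringDelta (M : ℕ) [NeZero M] (lam mu : Fin M → ℝ) (u : Fin M → Bool)
    (j : Fin M) : ℝ :=
  ringd M lam mu u j / ringr M lam mu u

/-- The `2^M × M` action drift matrix `D`, whose rows are the vectors `Δ(u)`. -/
noncomputable def ringD (M : ℕ) [NeZero M] (lam mu : Fin M → ℝ) :
    Matrix (Fin M → Bool) (Fin M) ℝ :=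
  Matrix.of fun u j => ringDelta M lam mu u j

lemma pow_shift_ring (M : ℕ) [NeZero M] (hM : 2 ≤ M) (hMeven : Even M) (j : Fin M) :
    (-1:ℝ) ^ ((j + 1 : Fin M) : ℕ) = -(-1:ℝ) ^ (j : ℕ) := by
  have h1 : ((1 : Fin M) : ℕ) = 1 := by
    simp [Fin.val_one', Nat.mod_eq_of_lt (by omega : 1 < M)]
  have hval : ((j + 1 : Fin M) : ℕ) = (j.val + 1) % M := by
    simp [Fin.add_def, h1]
  rcases lt_or_eq_of_le (Nat.succ_le_of_lt j.isLt) with h | h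
  · rw [hval, Nat.mod_eq_of_lt h, pow_succ]; ring
  · rw [hval, show (j:ℕ) + 1 = M from h, Nat.mod_self, pow_zero]
    have hodd : Odd (j : ℕ) := by
      rcases hMeven with ⟨k, hk⟩
      exact ⟨k - 1, by omega⟩
    rw [hodd.neg_one_pow]; ring

/-- For the critical push-pull ring (`μ = λ`) with an even number `M` of servers, the
vector `α` with entries `αⱼ = (-1)^(j+1) λⱼ⁻¹` (for 1-based `j`, i.e. alternating signs
starting with `+λ₁⁻¹`) satisfies `D α = 0`: it is orthogonal to the drift of every
action. -/
theorem ring_Dalpha_eq_zero (M : ℕ) [NeZero M] (hM : 2 ≤ M) (hMeven : Even M)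
    (lam : Fin M → ℝ) (hlam : ∀ j, 0 < lam j) :
    Matrix.mulVec (ringD M lam lam) (fun j : Fin M => (-1 : ℝ) ^ (j : ℕ) * (lam j)⁻¹)
      = 0 := by
  funext u
  simp only [Matrix.mulVec, dotProduct, ringD, Matrix.of_apply, ringDelta,
    Pi.zero_apply]
  have hrw : ∀ j : Fin M,
      ringd M lam lam u j / ringr M lam lam u * ((-1:ℝ)^(j:ℕ) * (lam j)⁻¹)
      = ((-1:ℝ)^(j:ℕ) * ((if u j then (1:ℝ) else 0) + (if u (j+1) then (1:ℝ) else 0) - 1))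
        / ringr M lam lam u := by
    intro j
    have h := (hlam j).ne'
    rcases Bool.eq_false_or_eq_true (u j) with hj | hj <;>
      rcases Bool.eq_false_or_eq_true (u (j+1)) with hj1 | hj1 <;>
      simp [ringd, hj, hj1, div_mul_eq_mul_div] <;> field_simp <;> ring
  rw [Finset.sum_congr rfl (fun j _ => hrw j), ← Finset.sum_div]
  have hnum : ∑ j : Fin M,
      (-1:ℝ)^(j:ℕ) * ((if u j then (1:ℝ) else 0) + (if u (j+1) then (1:ℝ) else 0) - 1)
      = 0 := by
    have hsplit : ∀ j : Fin M,
        (-1:ℝ)^(j:ℕ) * ((if u j then (1:ℝ) else 0) + (if u (j+1) then (1:ℝ) else 0) - 1)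
        = (-1:ℝ)^(j:ℕ) * (if u j then (1:ℝ) else 0)
          + (-1:ℝ)^(j:ℕ) * (if u (j+1) then (1:ℝ) else 0)
          - (-1:ℝ)^(j:ℕ) := fun j => by ring
    rw [Finset.sum_congr rfl (fun j _ => hsplit j), Finset.sum_sub_distrib,
      Finset.sum_add_distrib]
    have hS3 : ∑ j : Fin M, (-1:ℝ)^(j:ℕ) = 0 := by
      rw [Fin.sum_univ_eq_sum_range, neg_one_geom_sum, if_pos hMeven]
    have hS2 : ∑ j : Fin M, (-1:ℝ)^(j:ℕ) * (if u (j+1) then (1:ℝ) else 0)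
        = ∑ j : Fin M, -((-1:ℝ)^(j:ℕ) * (if u j then (1:ℝ) else 0)) := by
      refine Fintype.sum_equiv (Equiv.addRight (1 : Fin M)) _ _ ?_
      intro j
      simp only [Equiv.coe_addRight]
      rw [pow_shift_ring M hM hMeven j]
      rcases Bool.eq_false_or_eq_true (u (j+1)) with h | h <;> simp [h]
    rw [hS2, hS3, Finset.sum_neg_distrib]
    ring
  rw [hnum, zero_div]
end

section
/- For the critical push-pull ring with an even number M of servers, the action drift matrix D has rank exactly M − 1 over ℝ. -/
open MeasureTheory
open scoped ENNReal

section aux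

variable (M : ℕ) [NeZero M] (lam : Fin M → ℝ)

/-- sign of a push/pull decision -/
def ringSgn (u : Fin M → Bool) (j : Fin M) : ℝ := if u j then 1 else -1

/-- the linear map `x ↦ (λⱼ (xⱼ + x_{j+1}) / 2)ⱼ` -/
noncomputable def ringT : (Fin M → ℝ) →ₗ[ℝ] (Fin M → ℝ) where
  toFun x := fun j => lam j * (x j + x (j + 1)) / 2
  map_add' x y := by funext j; simp [Pi.add_apply]; ring
  map_smul' c x := by funext j; simp [Pi.smul_apply, smul_eq_mul]; ring

lemma ringd_eq (u : Fin M → Bool) (j : Fin M) :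
    ringd M lam lam u j = lam j * (ringSgn M u j + ringSgn M u (j + 1)) / 2 := by
  cases hu : u j <;> cases hv : u (j + 1) <;> simp [ringd, ringSgn, hu, hv] <;> ring

lemma ringr_pos (hlam : ∀ j, 0 < lam j) (u : Fin M → Bool) : 0 < ringr M lam lam u := by
  refine Finset.sum_pos (fun i _ => ?_) Finset.univ_nonempty
  split_ifs <;> apply hlam

lemma ringD_row_eq (hlam : ∀ j, 0 < lam j) (u : Fin M → Bool) :
    ringD M lam lam u = (ringr M lam lam u)⁻¹ • (ringT M lam) (ringSgn M u) := by
  funext j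
  simp only [ringD, Matrix.of_apply, ringDelta, ringT, LinearMap.coe_mk, AddHom.coe_mk,
    Pi.smul_apply, smul_eq_mul, ringd_eq]
  rw [div_eq_inv_mul]

lemma sgn_span_top : Submodule.span ℝ (Set.range (ringSgn M)) = ⊤ := by
  rw [eq_top_iff]
  intro x _
  have hx : x = ∑ k : Fin M, x k • (fun j => if k = j then (1:ℝ) else 0) := pi_eq_sum_univ x
  rw [hx]
  refine Submodule.sum_mem _ (fun k _ => Submodule.smul_mem _ _ ?_)
  have hone : (fun _ => (1:ℝ)) ∈ Submodule.span ℝ (Set.range (ringSgn M)) := by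
    refine Submodule.subset_span ⟨fun _ => true, ?_⟩
    funext j; simp [ringSgn]
  have hflip : (fun j => if k = j then (-1:ℝ) else 1) ∈ Submodule.span ℝ (Set.range (ringSgn M)) := by
    refine Submodule.subset_span ⟨fun j => decide ¬(k = j), ?_⟩
    funext j; by_cases h : k = j <;> simp [ringSgn, h]
  have : (fun j => if k = j then (1:ℝ) else 0) =
      (1/2 : ℝ) • (fun _ => (1:ℝ)) - (1/2 : ℝ) • (fun j => if k = j then (-1:ℝ) else 1) := by
    funext j; by_cases h : k = j <;> simp [h] <;> norm_num
  rw [this]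
  exact Submodule.sub_mem _ (Submodule.smul_mem _ _ hone) (Submodule.smul_mem _ _ hflip)

end aux

section aux2
variable (M : ℕ) [NeZero M] (lam : Fin M → ℝ)

lemma neg_one_pow_mod (hMeven : Even M) (n : ℕ) : ((-1:ℝ))^(n % M) = (-1)^n := by
  conv_rhs => rw [← Nat.div_add_mod n M]
  rw [pow_add, pow_mul, Even.neg_one_pow hMeven, one_pow, one_mul]

lemma fin_add_one_val (hM : 2 ≤ M) (j : Fin M) : ((j + 1 : Fin M) : ℕ) = (j.val + 1) % M := by
  have h1 : ((1 : Fin M) : ℕ) = 1 := by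
    have : (1 : ℕ) % M = 1 := Nat.mod_eq_of_lt (by omega)
    simp [Fin.val_one', this]
  rw [Fin.val_add, h1]

lemma ringT_ker (hM : 2 ≤ M) (hMeven : Even M) (hlam : ∀ j, 0 < lam j) :
    LinearMap.ker (ringT M lam) =
      Submodule.span ℝ {fun j : Fin M => ((-1:ℝ))^(j : ℕ)} := by
  apply le_antisymm
  · intro x hx
    have hrel : ∀ j : Fin M, x (j + 1) = -x j := by
      intro j
      have := congrFun (LinearMap.mem_ker.mp hx) j
      simp only [ringT, LinearMap.coe_mk, AddHom.coe_mk, Pi.zero_apply] at this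
      have hl : lam j ≠ 0 := ne_of_gt (hlam j)
      have h2 : lam j * (x j + x (j + 1)) = 0 := by linarith
      rcases mul_eq_zero.mp h2 with h | h
      · exact absurd h hl
      · linarith
    have key : ∀ n (h : n < M), x ⟨n, h⟩ = (-1)^n * x 0 := by
      intro n
      induction n with
      | zero =>
        intro h
        have h0 : (⟨0, h⟩ : Fin M) = 0 := Fin.ext (by simp)
        rw [h0]; simp
      | succ n ih =>
        intro h
        have hn : n < M := by omega
        have hfin : (⟨n, hn⟩ : Fin M) + 1 = ⟨n + 1, h⟩ := by
          apply Fin.ext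
          rw [fin_add_one_val M hM]
          exact Nat.mod_eq_of_lt h
        have := hrel ⟨n, hn⟩
        rw [hfin, ih hn] at this
        rw [this, pow_succ]
        ring
    rw [Submodule.mem_span_singleton]
    refine ⟨x 0, ?_⟩
    funext j
    have := key j.val j.isLt
    simp only [Fin.eta] at this
    simp only [Pi.smul_apply, smul_eq_mul]
    rw [this]; ring
  · rw [Submodule.span_le, Set.singleton_subset_iff]
    rw [SetLike.mem_coe, LinearMap.mem_ker]
    funext j
    simp only [ringT, LinearMap.coe_mk, AddHom.coe_mk, Pi.zero_apply]
    have : ((-1:ℝ))^(((j + 1 : Fin M)) : ℕ) = -(-1:ℝ)^(j : ℕ) := by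
      rw [fin_add_one_val M hM, neg_one_pow_mod M hMeven, pow_succ]
      ring
    rw [this]
    ring

end aux2

/-- For the critical push-pull ring (`μ = λ`) with an even number `M` of servers, the
action drift matrix `D` has rank exactly `M - 1` over `ℝ`. -/
theorem ring_rank_even (M : ℕ) [NeZero M] (hM : 2 ≤ M) (hMeven : Even M)
    (lam : Fin M → ℝ) (hlam : ∀ j, 0 < lam j) :
    (ringD M lam lam).rank = M - 1 := by
  rw [Matrix.rank_eq_finrank_span_row]
  have hspan : Submodule.span ℝ (Set.range (ringD M lam lam)) = LinearMap.range (ringT M lam) := by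
    apply le_antisymm
    · rw [Submodule.span_le]
      rintro _ ⟨u, rfl⟩
      rw [SetLike.mem_coe, ringD_row_eq M lam hlam u]
      exact Submodule.smul_mem _ _ (LinearMap.mem_range_self _ _)
    · rw [LinearMap.range_eq_map, ← sgn_span_top M, Submodule.map_span, Submodule.span_le]
      rintro _ ⟨_, ⟨u, rfl⟩, rfl⟩
      have hT : (ringT M lam) (ringSgn M u) = ringr M lam lam u • ringD M lam lam u := by
        rw [ringD_row_eq M lam hlam u, smul_smul,
          mul_inv_cancel₀ (ne_of_gt (ringr_pos M lam hlam u)), one_smul]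
      rw [SetLike.mem_coe, hT]
      exact Submodule.smul_mem _ _ (Submodule.subset_span ⟨u, rfl⟩)
  rw [show (ringD M lam lam).row = ringD M lam lam from rfl, hspan]
  have hrn := LinearMap.finrank_range_add_finrank_ker (ringT M lam)
  rw [ringT_ker M lam hM hMeven hlam, Module.finrank_fin_fun] at hrn
  have hv : (fun j : Fin M => ((-1:ℝ))^(j : ℕ)) ≠ 0 := by
    intro h
    have := congrFun h 0
    simp at this
  rw [finrank_span_singleton hv] at hrn
  omega
end

section
/- For the critical push-pull ring with an odd number M of servers, the action drift matrix D has full rank M over ℝ. -/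
open MeasureTheory
open scoped ENNReal

/-- For the critical push-pull ring (`μ = λ`) with an odd number `M` of servers, the
action drift matrix `D` has full rank `M` over `ℝ`. -/
theorem ring_rank_odd (M : ℕ) [NeZero M] (hM : 2 ≤ M) (hModd : Odd M)
    (lam : Fin M → ℝ) (hlam : ∀ j, 0 < lam j) :
    (ringD M lam lam).rank = M := by
  classical
  have hM1 : M ≠ 1 := by omega
  have hone : (1 : Fin M) ≠ 0 := by
    simp only [ne_eq, Fin.one_eq_zero_iff]
    omega
  have hrpos : ∀ u : Fin M → Bool, 0 < ringr M lam lam u := by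
    intro u
    refine Finset.sum_pos (fun j _ => ?_) ⟨0, Finset.mem_univ _⟩
    split
    · exact hlam j
    · exact hlam (j - 1)
  have hker : ∀ x : Fin M → ℝ, (ringD M lam lam).mulVec x = 0 → x = 0 := by
    intro x hx
    have key : ∀ u : Fin M → Bool, ∑ j, ringd M lam lam u j * x j = 0 := by
      intro u
      have h0 : ∑ j, ringd M lam lam u j / ringr M lam lam u * x j = 0 := by
        have := congrFun hx u
        simpa [Matrix.mulVec, dotProduct, ringD, ringDelta] using this
      have h1 : (∑ j, ringd M lam lam u j * x j) / ringr M lam lam u = 0 := by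
        rw [Finset.sum_div]
        rw [← h0]
        refine Finset.sum_congr rfl fun j _ => ?_
        ring
      rcases div_eq_zero_iff.1 h1 with h | h
      · exact h
      · exact absurd h (hrpos u).ne'
    have e1 : ∑ j, lam j * x j = 0 := by
      have := key (fun _ => true)
      simpa [ringd] using this
    set y : Fin M → ℝ := fun j => lam j * x j with hy
    have e2 : ∀ k : Fin M, y (k - 1) + y k = 0 := by
      intro k
      have hk : k ≠ k - 1 := by
        intro h
        apply hone
        have : k + 1 = k + 0 := by
          conv_lhs => rw [h]
          simp [sub_add_cancel]
        exact add_left_cancel this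
      have hd : ∀ j : Fin M, ringd M lam lam (fun i => decide (i ≠ k)) j
          = if j = k ∨ j = k - 1 then 0 else lam j := by
        intro j
        have hsub : j + 1 = k ↔ j = k - 1 := by
          constructor
          · intro h; rw [← h]; simp
          · intro h; rw [h]; simp [sub_add_cancel]
        simp only [ringd, decide_eq_true_eq, ne_eq, ite_not]
        by_cases h1 : j = k <;> by_cases h2 : j + 1 = k
        · exfalso
          apply hone
          have : j + 1 = j + 0 := by rw [h2, h1]; simp
          exact add_left_cancel this
        · simp [h1, h2, hsub, hM1]
        · simp [h1, h2, hsub.1 h2, hM1]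
        · have h3 : j ≠ k - 1 := fun h => h2 (hsub.2 h)
          simp [h1, h2, h3]
      have h2 := key (fun i => decide (i ≠ k))
      have hsum0 : ∑ j, (if j = k ∨ j = k - 1 then (0:ℝ) else lam j) * x j = 0 := by
        have hc : (∑ j, (if j = k ∨ j = k - 1 then (0:ℝ) else lam j) * x j)
            = ∑ j, ringd M lam lam (fun i => decide (i ≠ k)) j * x j :=
          Finset.sum_congr rfl fun j _ => by rw [hd j]
        rw [hc]
        exact h2
      have hpair : ∑ j, (if j = k ∨ j = k - 1 then y j else 0) = 0 := by
        have : ∀ j : Fin M, (if j = k ∨ j = k - 1 then y j else 0)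
            = lam j * x j - (if j = k ∨ j = k - 1 then (0:ℝ) else lam j) * x j := by
          intro j
          by_cases h : j = k ∨ j = k - 1 <;> simp [h, hy]
        rw [Finset.sum_congr rfl fun j _ => this j, Finset.sum_sub_distrib, e1, hsum0]
        ring
      have hmem : ∀ j : Fin M, (j = k ∨ j = k - 1) ↔ j ∈ ({k, k - 1} : Finset (Fin M)) := by
        intro j; simp
      rw [Finset.sum_congr rfl (fun j _ => by rw [if_congr (hmem j) rfl rfl])] at hpair
      rw [Finset.sum_ite_mem, Finset.univ_inter, Finset.sum_pair hk] at hpair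
      linarith [hpair]
    have estep : ∀ k : Fin M, y (k + 1) = - y k := by
      intro k
      have := e2 (k + 1)
      have h : k + 1 - 1 = k := by simp
      rw [h] at this
      linarith
    open Fin.NatCast in
    have hiter : ∀ (n : ℕ) (k : Fin M), y (k + (n : Fin M)) = (-1 : ℝ) ^ n * y k := by
      intro n
      induction n with
      | zero => intro k; simp
      | succ n ih =>
        intro k
        have : (((n : ℕ) + 1 : ℕ) : Fin M) = (n : Fin M) + 1 := by push_cast; ring
        rw [this, ← add_assoc, estep (k + (n : Fin M)), ih k]
        ring
    have hy0 : ∀ k : Fin M, y k = 0 := by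
      intro k
      have h := hiter M k
      rw [Fin.natCast_self, add_zero, hModd.neg_one_pow] at h
      linarith
    funext k
    have := hy0 k
    have hlk := (hlam k).ne'
    simp only [hy] at this
    rcases mul_eq_zero.1 this with h | h
    · exact absurd h hlk
    · simpa using h
  have hkb : LinearMap.ker (ringD M lam lam).mulVecLin = ⊥ :=
    LinearMap.ker_eq_bot'.2 fun x hx => hker x hx
  have hrn := LinearMap.finrank_range_add_finrank_ker (ringD M lam lam).mulVecLin
  rw [hkb, finrank_bot, add_zero] at hrn
  rw [Matrix.rank, hrn]
  simp [Module.finrank_fintype_fun_eq_card]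
end

section
/- (Non-stabilizability of the critical push-pull ring with an even number of servers, hitting-time form.) Let M be even and let α ∈ ℝ^M have entries α_j = (−1)^{j+1}·λ_j^{−1}. Then for every non-idling policy 𝒫, every realization (X_n) of the induced chain started at a state x ∈ ℤ₊^M, and every state y ∈ ℤ₊^M with α⋅x ≠ α⋅y, the hitting time T_y = inf{n ≥ 0 : X_n = y} has infinite expectation: E[T_y] = ∞. -/
open MeasureTheory
open scoped ENNReal

/-- A non-idling policy for the push-pull ring: server `j` may pull (from stream `j-1`,
decreasing queue `j-1`) only if queue `j-1` is nonempty. -/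
def RingNonIdling (M : ℕ) [NeZero M] (P : (Fin M → ℕ) → (Fin M → Bool)) : Prop :=
  ∀ (z : Fin M → ℕ) (j : Fin M), P z j = false → 0 < z (j - 1)

/-- Transition probabilities of the chain induced by a policy `P` for the *critical*
push-pull ring (`μ = λ`): under action `u = P z`, the chain moves to `z + eⱼ` with
probability `λⱼ / r(u)` for each pushing server `j`, and to `z - e_{j-1}` with
probability `μ_{j-1} / r(u) = λ_{j-1} / r(u)` for each pulling server `j`. -/
noncomputable def ringTrans (M : ℕ) [NeZero M] (lam : Fin M → ℝ)
    (P : (Fin M → ℕ) → (Fin M → Bool)) (z z' : Fin M → ℕ) : ℝ :=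
  ∑ j : Fin M,
    ((if P z j = true ∧ z' = Function.update z j (z j + 1) then
        lam j / ringr M lam lam (P z) else 0) +
     (if P z j = false ∧ z' = Function.update z (j - 1) (z (j - 1) - 1) then
        lam (j - 1) / ringr M lam lam (P z) else 0))

namespace PPAux
variable {M : ℕ} [NeZero M]

/-- the next state when server j acts -/
def gstep (P : (Fin M → ℕ) → Fin M → Bool) (z : Fin M → ℕ) (j : Fin M) : Fin M → ℕ :=
  if P z j then Function.update z j (z j + 1) else Function.update z (j-1) (z (j-1) - 1)

noncomputable def wstep (lam : Fin M → ℝ) (P : (Fin M → ℕ) → Fin M → Bool)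
    (z : Fin M → ℕ) (j : Fin M) : ℝ :=
  (if P z j then lam j else lam (j-1)) / ringr M lam lam (P z)

noncomputable def fval (lam : Fin M → ℝ) (z : Fin M → ℕ) : ℝ :=
  ∑ j : Fin M, (-1 : ℝ) ^ (j : ℕ) * (lam j)⁻¹ * (z j : ℝ)

variable {lam : Fin M → ℝ} {P : (Fin M → ℕ) → Fin M → Bool}

lemma gstep_injective (hP : RingNonIdling M P) (z : Fin M → ℕ) :
    Function.Injective (gstep P z) := by
  intro j j' h
  by_contra hne
  unfold gstep at h
  rcases hj : P z j with _ | _ <;> rcases hj' : P z j' with _ | _ <;>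
    simp only [hj, hj', if_true, if_false, Bool.false_eq_true] at h
  · -- both pull
    have hjj' : ¬ (j - 1) = (j' - 1) := fun hc => hne (by
      have h2 := congrArg (· + 1) hc
      rwa [sub_add_cancel, sub_add_cancel] at h2)
    have := congrFun h (j - 1)
    rw [Function.update_self, Function.update_apply, if_neg hjj'] at this
    have hpos := hP z j hj
    omega
  · -- j pulls, j' pushes
    have := congrFun h j'
    rw [Function.update_apply, Function.update_self] at this
    have hpos := hP z j hj
    split_ifs at this with hc
    · rw [hc] at this; omega
    · omega
  · -- j pushes, j' pulls
    have := congrFun h j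
    rw [Function.update_self, Function.update_apply] at this
    have hpos := hP z j' hj'
    split_ifs at this with hc
    · rw [hc] at this; omega
    · omega
  · -- both push
    have := congrFun h j
    rw [Function.update_self, Function.update_apply, if_neg hne] at this
    omega

lemma ringr_pos (hlam : ∀ j, 0 < lam j) (u : Fin M → Bool) : 0 < ringr M lam lam u := by
  unfold ringr
  apply Finset.sum_pos
  · intro j _
    by_cases h : u j <;> simp [h, hlam]
  · exact Finset.univ_nonempty

lemma ringTrans_gstep (hP : RingNonIdling M P) (hlam : ∀ j, 0 < lam j)
    (z : Fin M → ℕ) (j0 : Fin M) :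
    ringTrans M lam P z (gstep P z j0) = wstep lam P z j0 := by
  unfold ringTrans
  rw [Finset.sum_eq_single j0]
  · rcases hj0 : P z j0 with _ | _ <;>
      simp only [hj0, Bool.false_eq_true, false_and, if_false, true_and, and_true,
        if_true, wstep, if_false, if_true] <;>
      unfold gstep <;> simp [hj0]
  · intro j _ hj
    have h1 : ¬ (P z j = true ∧ gstep P z j0 = Function.update z j (z j + 1)) := by
      rintro ⟨hpj, he⟩
      have : gstep P z j0 = gstep P z j := by rw [he]; unfold gstep; simp [hpj]
      exact hj (gstep_injective hP z this).symm
    have h2 : ¬ (P z j = false ∧ gstep P z j0 = Function.update z (j-1) (z (j-1) - 1)) := by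
      rintro ⟨hpj, he⟩
      have : gstep P z j0 = gstep P z j := by
        rw [he]; unfold gstep; simp [hpj]
      exact hj (gstep_injective hP z this).symm
    simp [h1, h2]
  · intro h; exact absurd (Finset.mem_univ j0) h

lemma sum_wstep (hlam : ∀ j, 0 < lam j) (z : Fin M → ℕ) :
    ∑ j : Fin M, wstep lam P z j = 1 := by
  unfold wstep
  rw [← Finset.sum_div]
  rw [div_eq_one_iff_eq (ne_of_gt (ringr_pos hlam (P z)))]
  rfl

lemma neg_one_pow_sub_one (hM : 2 ≤ M) (hMeven : Even M) (j : Fin M) :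
    (-1 : ℝ) ^ ((j - 1 : Fin M) : ℕ) = -(-1 : ℝ) ^ (j : ℕ) := by
  have h1 : ((1 : Fin M) : ℕ) = 1 := by
    simp [Fin.val_one', Nat.mod_eq_of_lt (by omega : 1 < M)]
  have hsub : ((j - 1 : Fin M) : ℕ) = ((j : ℕ) + (M - 1)) % M := by
    rw [Fin.sub_def]
    simp [h1, Nat.add_comm]
    rw [Nat.mod_eq_of_lt (show (1:ℕ) < M by omega)]
  have hper : ∀ k : ℕ, (-1 : ℝ) ^ (k % M) = (-1 : ℝ) ^ k := by
    intro k
    conv_rhs => rw [← Nat.mod_add_div k M]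
    rw [pow_add, pow_mul, hMeven.neg_one_pow, one_pow, mul_one]
  have hm1 : (-1 : ℝ) ^ (M - 1) = -1 := by
    have hM2 : Even (M - 2) := by
      rcases hMeven with ⟨m, hm⟩
      exact ⟨m - 1, by omega⟩
    rw [show M - 1 = (M - 2) + 1 by omega, pow_succ, hM2.neg_one_pow]
    ring
  rw [hsub, hper, pow_add, hm1]
  ring

lemma sum_neg_one_pow (hMeven : Even M) : ∑ j : Fin M, (-1 : ℝ) ^ (j : ℕ) = 0 := by
  rw [Fin.sum_univ_eq_sum_range (fun k => (-1 : ℝ) ^ k)]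
  rw [neg_one_geom_sum, if_pos hMeven]

lemma fval_update (z : Fin M → ℕ) (j : Fin M) (v : ℕ) :
    fval lam (Function.update z j v) = fval lam z + (-1:ℝ)^(j:ℕ) * (lam j)⁻¹ * ((v:ℝ) - (z j : ℝ)) := by
  unfold fval
  have h : ∀ i ∈ (Finset.univ : Finset (Fin M)),
      (-1:ℝ)^(i:ℕ) * (lam i)⁻¹ * ((Function.update z j v i : ℕ) : ℝ)
      = (-1:ℝ)^(i:ℕ) * (lam i)⁻¹ * (z i : ℝ)
        + (if i = j then (-1:ℝ)^(j:ℕ) * (lam j)⁻¹ * ((v:ℝ) - (z j : ℝ)) else 0) := by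
    intro i _
    by_cases hi : i = j
    · subst hi; simp [Function.update_self]; ring
    · simp [Function.update_of_ne hi, hi]
  rw [Finset.sum_congr rfl h, Finset.sum_add_distrib,
    Finset.sum_ite_eq' Finset.univ j, if_pos (Finset.mem_univ j)]

lemma fval_gstep (hP : RingNonIdling M P) (hM : 2 ≤ M) (hMeven : Even M)
    (z : Fin M → ℕ) (j : Fin M) :
    fval lam (gstep P z j) = fval lam z +
      (if P z j then (-1:ℝ)^(j:ℕ) * (lam j)⁻¹ else -((-1:ℝ)^(((j-1 : Fin M)):ℕ) * (lam (j-1))⁻¹)) := by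
  unfold gstep
  rcases hj : P z j with _ | _ <;> simp only [hj, if_true, if_false, Bool.false_eq_true]
  · have hpos := hP z j hj
    rw [fval_update]
    have : ((z (j-1) - 1 : ℕ) : ℝ) = (z (j-1) : ℝ) - 1 := by
      rw [Nat.cast_sub hpos]; norm_num
    rw [this]
    ring
  · rw [fval_update]
    push_cast
    ring

/-- The key drift identity: `f` is harmonic for the critical ring. -/
lemma drift_zero (hP : RingNonIdling M P) (hlam : ∀ j, 0 < lam j)
    (hM : 2 ≤ M) (hMeven : Even M) (z : Fin M → ℕ) :
    ∑ j : Fin M, wstep lam P z j * fval lam (gstep P z j) = fval lam z := by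
  have key : ∀ j : Fin M, wstep lam P z j * (fval lam (gstep P z j) - fval lam z)
      = (-1:ℝ)^(j:ℕ) / ringr M lam lam (P z) := by
    intro j
    rw [fval_gstep hP hM hMeven]
    unfold wstep
    rcases hj : P z j with _ | _ <;> simp only [hj, if_true, if_false, Bool.false_eq_true]
    · rw [neg_one_pow_sub_one hM hMeven]
      field_simp
      rw [add_sub_cancel_left, mul_div_assoc', mul_div_cancel_left₀ _ (hlam _).ne']
    · field_simp
      rw [add_sub_cancel_left, mul_div_assoc', mul_div_cancel_left₀ _ (hlam _).ne']
  have h2 : ∑ j : Fin M, wstep lam P z j * (fval lam (gstep P z j) - fval lam z) = 0 := by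
    rw [Finset.sum_congr rfl (fun j _ => key j)]
    rw [← Finset.sum_div, sum_neg_one_pow hMeven]
    simp
  have h3 := sum_wstep (P := P) hlam z
  have : ∑ j : Fin M, (wstep lam P z j * fval lam (gstep P z j)
      - wstep lam P z j * fval lam z) = 0 := by
    rw [← h2]; congr 1; ext j; ring
  rw [Finset.sum_sub_distrib, ← Finset.sum_mul, h3, one_mul] at this
  linarith


lemma abs_fval_gstep_sub (hP : RingNonIdling M P) (hlam : ∀ j, 0 < lam j)
    (hM : 2 ≤ M) (hMeven : Even M) (z : Fin M → ℕ) (j : Fin M) :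
    |fval lam (gstep P z j) - fval lam z| ≤ ∑ i : Fin M, (lam i)⁻¹ := by
  rw [fval_gstep hP hM hMeven, add_sub_cancel_left]
  have hgen : ∀ k : Fin M, |(-1:ℝ)^(k:ℕ) * (lam k)⁻¹| ≤ ∑ i : Fin M, (lam i)⁻¹ := by
    intro k
    rw [abs_mul, abs_pow, abs_neg, abs_one, one_pow, one_mul,
      abs_of_nonneg (inv_nonneg.2 (hlam k).le)]
    exact Finset.single_le_sum (fun i _ => inv_nonneg.2 (hlam i).le) (Finset.mem_univ k)
  rcases hj : P z j with _ | _ <;> simp only [if_true, if_false, Bool.false_eq_true]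
  · rw [abs_neg]; exact hgen _
  · exact hgen _

lemma measurable_comp_nat {Ω : Type} [MeasurableSpace Ω] {S : Type*} [MeasurableSpace S]
    [MeasurableSingletonClass S] [Countable S] {X : ℕ → Ω → S}
    (hX : ∀ n, Measurable (X n)) {m : Ω → ℕ} (hm : Measurable m) :
    Measurable fun ω => X (m ω) ω := by
  apply measurable_to_countable'
  intro z
  have h : (fun ω => X (m ω) ω) ⁻¹' {z} = ⋃ k, (m ⁻¹' {k} ∩ X k ⁻¹' {z}) := by
    ext ω
    simp only [Set.mem_preimage, Set.mem_singleton_iff, Set.mem_iUnion, Set.mem_inter_iff]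
    constructor
    · intro hh; exact ⟨m ω, rfl, hh⟩
    · rintro ⟨k, hk, hh⟩; rw [hk]; exact hh
  rw [h]
  exact MeasurableSet.iUnion fun k =>
    (hm (measurableSet_singleton k)).inter (hX k (measurableSet_singleton z))

end PPAux


/-- Non-stabilizability of the critical push-pull ring with an even number of servers,
hitting-time form: with `αⱼ = (-1)^(j+1) λⱼ⁻¹`, for every non-idling policy, every
realization of the induced chain started at `x`, and every state `y` with
`α ⬝ x ≠ α ⬝ y`, the hitting time of `y` has infinite expectation. -/
theorem ring_hitting_time_infinite (M : ℕ) [NeZero M] (hM : 2 ≤ M) (hMeven : Even M)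
    (lam : Fin M → ℝ) (hlam : ∀ j, 0 < lam j)
    (P : (Fin M → ℕ) → (Fin M → Bool)) (hP : RingNonIdling M P)
    {Ω : Type} {mΩ : MeasurableSpace Ω} (μ : Measure Ω) [IsProbabilityMeasure μ]
    (ℱ : Filtration ℕ mΩ) (X : ℕ → Ω → (Fin M → ℕ))
    (x : Fin M → ℕ) (hX0 : ∀ᵐ ω ∂μ, X 0 ω = x)
    (hX : IsRealization μ ℱ X (ringTrans M lam P))
    (y : Fin M → ℕ)
    (hxy : ∑ j : Fin M, (-1 : ℝ) ^ (j : ℕ) * (lam j)⁻¹ * (x j : ℝ)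
         ≠ ∑ j : Fin M, (-1 : ℝ) ^ (j : ℕ) * (lam j)⁻¹ * (y j : ℝ)) :
    ∫⁻ ω, hitTime X y ω ∂μ = ⊤ := by
  classical
  set f : (Fin M → ℕ) → ℝ := PPAux.fval lam with hfdef
  set p : (Fin M → ℕ) → (Fin M → ℕ) → ℝ := ringTrans M lam P with hpdef
  set c : ℝ := ∑ i : Fin M, (lam i)⁻¹ with hcdef
  have hc0 : 0 ≤ c := Finset.sum_nonneg fun i _ => inv_nonneg.2 (hlam i).le
  obtain ⟨hadp, hreal⟩ := hX
  have hXm : ∀ n, Measurable (X n) := fun n => (hadp n).mono (ℱ.le n) le_rfl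
  have hXsm : ∀ (n : ℕ) (z : Fin M → ℕ), MeasurableSet[ℱ n] {ω | X n ω = z} := fun n z =>
    (hadp n) (measurableSet_singleton z)
  have hXsm' : ∀ (n : ℕ) (z : Fin M → ℕ), MeasurableSet {ω | X n ω = z} := fun n z =>
    (ℱ.le n) _ (hXsm n z)
  have hind_int : ∀ (n : ℕ) (z' : Fin M → ℕ),
      Integrable (Set.indicator {ω' | X (n+1) ω' = z'} (fun _ => (1:ℝ))) μ := fun n z' =>
    (integrable_const (1:ℝ)).indicator (hXsm' (n+1) z')
  have hmeas_step : ∀ (n : ℕ) (z z' : Fin M → ℕ) (A : Set Ω), MeasurableSet[ℱ n] A →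
      (∀ ω ∈ A, X n ω = z) →
      (μ (A ∩ {ω | X (n+1) ω = z'})).toReal = p z z' * (μ A).toReal := by
    intro n z z' A hA hAz
    have hAm : MeasurableSet A := ℱ.le n A hA
    have h1 : ∫ ω in A, (μ[Set.indicator {ω' | X (n+1) ω' = z'} (fun _ => (1:ℝ)) | ℱ n]) ω ∂μ
        = ∫ ω in A, Set.indicator {ω' | X (n+1) ω' = z'} (fun _ => (1:ℝ)) ω ∂μ :=
      setIntegral_condExp (ℱ.le n) (hind_int n z') hA
    have h2 : ∫ ω in A, (μ[Set.indicator {ω' | X (n+1) ω' = z'} (fun _ => (1:ℝ)) | ℱ n]) ω ∂μ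
        = ∫ _ω in A, p z z' ∂μ := by
      apply setIntegral_congr_ae hAm
      filter_upwards [hreal n z z'] with ω hω hmem
      exact hω (hAz ω hmem)
    have h3 : ∫ ω in A, Set.indicator {ω' | X (n+1) ω' = z'} (fun _ => (1:ℝ)) ω ∂μ
        = (μ (A ∩ {ω | X (n+1) ω = z'})).toReal := by
      rw [setIntegral_indicator (hXsm' (n+1) z'), setIntegral_const]
      simp
      rfl
    rw [← h3, ← h1, h2, setIntegral_const, smul_eq_mul, mul_comm, measureReal_def]
  have hstep : ∀ n : ℕ, ∀ᵐ ω ∂μ, ∃ j : Fin M, X (n+1) ω = PPAux.gstep P (X n ω) j := by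
    intro n
    have key : ∀ z : Fin M → ℕ,
        μ ({ω | X n ω = z} \ ⋃ j : Fin M, {ω | X (n+1) ω = PPAux.gstep P z j}) = 0 := by
      intro z
      set B : Set Ω := {ω | X n ω = z} with hBdef
      set C : Fin M → Set Ω := fun j => {ω | X (n+1) ω = PPAux.gstep P z j} with hCdef
      have hBm : MeasurableSet B := hXsm' n z
      have hCm : ∀ j, MeasurableSet (C j) := fun j => hXsm' (n+1) _
      have hUm : MeasurableSet (⋃ j, C j) := MeasurableSet.iUnion hCm
      have hdisj : (↑(Finset.univ : Finset (Fin M)) : Set (Fin M)).PairwiseDisjoint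
          (fun j => B ∩ C j) := by
        intro j _ j' _ hjj'
        apply Set.disjoint_left.mpr
        rintro ω ⟨_, h1⟩ ⟨_, h2⟩
        exact hjj' (PPAux.gstep_injective hP z (h1.symm.trans h2))
      have hre : B ∩ ⋃ j, C j = ⋃ j ∈ (Finset.univ : Finset (Fin M)), (B ∩ C j) := by
        simp [Set.inter_iUnion]
      have hsum : (μ (B ∩ ⋃ j, C j)).toReal = (μ B).toReal := by
        rw [hre, measure_biUnion_finset hdisj (fun j _ => hBm.inter (hCm j)),
          ENNReal.toReal_sum (fun j _ => measure_ne_top μ _)]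
        have hterm : ∀ j ∈ (Finset.univ : Finset (Fin M)),
            (μ (B ∩ C j)).toReal = PPAux.wstep lam P z j * (μ B).toReal := by
          intro j _
          rw [hmeas_step n z _ B (hXsm n z) (fun ω hω => hω)]
          rw [hpdef, PPAux.ringTrans_gstep hP hlam]
        rw [Finset.sum_congr rfl hterm, ← Finset.sum_mul, PPAux.sum_wstep hlam, one_mul]
      have hμeq : μ (B ∩ ⋃ j, C j) = μ B :=
        (ENNReal.toReal_eq_toReal_iff' (measure_ne_top μ _) (measure_ne_top μ _)).mp hsum
      rw [← Set.diff_self_inter,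
        measure_diff Set.inter_subset_left (hBm.inter hUm).nullMeasurableSet
          (measure_ne_top μ _), hμeq, tsub_self]
    have h2 : ∀ᵐ ω ∂μ, ∀ z : Fin M → ℕ,
        ω ∉ ({ω | X n ω = z} \ ⋃ j : Fin M, {ω | X (n+1) ω = PPAux.gstep P z j}) :=
      ae_all_iff.mpr fun z => measure_eq_zero_iff_ae_notMem.mp (key z)
    filter_upwards [h2] with ω hω
    have h3 : ω ∈ ⋃ j : Fin M, {ω' | X (n+1) ω' = PPAux.gstep P (X n ω) j} := by
      by_contra hc
      exact hω (X n ω) ⟨rfl, hc⟩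
    simpa using h3
  have hbd : ∀ᵐ ω ∂μ, ∀ n : ℕ, |f (X n ω)| ≤ |f x| + c * n := by
    rw [ae_all_iff]
    intro n
    induction n with
    | zero =>
      filter_upwards [hX0] with ω h
      rw [h]; simp
    | succ n ih =>
      filter_upwards [ih, hstep n] with ω h1 h2
      obtain ⟨j, hj⟩ := h2
      have hs := PPAux.abs_fval_gstep_sub (lam := lam) hP hlam hM hMeven (X n ω) j
      rw [hj]
      have h3 : |f (PPAux.gstep P (X n ω) j)|
          ≤ |f (X n ω)| + |f (PPAux.gstep P (X n ω) j) - f (X n ω)| := by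
        have := abs_add_le (f (X n ω)) (f (PPAux.gstep P (X n ω) j) - f (X n ω))
        simpa using this
      have hc' : |f (PPAux.gstep P (X n ω) j) - f (X n ω)| ≤ c := hs
      push_cast
      linarith
  have hfint : ∀ n, Integrable (fun ω => f (X n ω)) μ := by
    intro n
    refine (integrable_const (|f x| + c * n)).mono'
      ((measurable_of_countable f).comp (hXm n)).aestronglyMeasurable ?_
    filter_upwards [hbd] with ω h
    simpa [Real.norm_eq_abs] using h n
  have hsint : ∀ (n : ℕ) (A : Set Ω), MeasurableSet[ℱ n] A →
      ∫ ω in A, f (X (n+1) ω) ∂μ = ∫ ω in A, f (X n ω) ∂μ := by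
    intro n A hA
    have hAm : MeasurableSet A := ℱ.le n A hA
    set B : (Fin M → ℕ) → Set Ω := fun z => A ∩ {ω | X n ω = z} with hBdef
    have hBm : ∀ z, MeasurableSet (B z) := fun z => hAm.inter (hXsm' n z)
    have hBmF : ∀ z, MeasurableSet[ℱ n] (B z) := fun z => hA.inter (hXsm n z)
    have hdisj : Pairwise (Function.onFun Disjoint B) := by
      intro z z' hzz'
      apply Set.disjoint_left.mpr
      rintro ω ⟨_, h1⟩ ⟨_, h2⟩
      exact hzz' ((show X n ω = z from h1).symm.trans (show X n ω = z' from h2))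
    have hAU : A = ⋃ z, B z := by
      ext ω
      simp only [Set.mem_iUnion, hBdef, Set.mem_inter_iff, Set.mem_setOf_eq]
      exact ⟨fun h => ⟨X n ω, h, rfl⟩, fun ⟨z, h, _⟩ => h⟩
    have key : ∀ z, ∫ ω in B z, f (X (n+1) ω) ∂μ = ∫ ω in B z, f (X n ω) ∂μ := by
      intro z
      have h1 : ∫ ω in B z, f (X (n+1) ω) ∂μ
          = ∫ ω in B z, (∑ j : Fin M, f (PPAux.gstep P z j) *
              Set.indicator {ω' | X (n+1) ω' = PPAux.gstep P z j} (fun _ => (1:ℝ)) ω) ∂μ := by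
        apply setIntegral_congr_ae (hBm z)
        filter_upwards [hstep n] with ω hω hmem
        obtain ⟨j0, hj0⟩ := hω
        have hz : X n ω = z := hmem.2
        rw [hz] at hj0
        rw [Finset.sum_eq_single j0]
        · rw [Set.indicator_of_mem (by exact hj0), hj0]
          ring
        · intro j _ hj
          have hnm : ω ∉ {ω' | X (n+1) ω' = PPAux.gstep P z j} := by
            intro hc
            exact hj (PPAux.gstep_injective hP z ((show X (n+1) ω = PPAux.gstep P z j from hc).symm.trans hj0).symm).symm
          rw [Set.indicator_of_notMem hnm]
          ring
        · intro h; exact absurd (Finset.mem_univ j0) h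
      have h2 : ∫ ω in B z, (∑ j : Fin M, f (PPAux.gstep P z j) *
              Set.indicator {ω' | X (n+1) ω' = PPAux.gstep P z j} (fun _ => (1:ℝ)) ω) ∂μ
          = ∑ j : Fin M, f (PPAux.gstep P z j) * (PPAux.wstep lam P z j * (μ (B z)).toReal) := by
        rw [integral_finset_sum _ (fun j _ =>
          (((hind_int n _).const_mul (f (PPAux.gstep P z j)))).integrableOn)]
        congr 1
        ext j
        rw [MeasureTheory.integral_const_mul, setIntegral_indicator (hXsm' (n+1) _), setIntegral_const,
          smul_eq_mul, mul_one]
        congr 1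
        rw [measureReal_def]
        have := hmeas_step n z (PPAux.gstep P z j) (B z) (hBmF z) (fun ω hω => hω.2)
        rw [this, hpdef, PPAux.ringTrans_gstep hP hlam]
      have h3 : ∑ j : Fin M, f (PPAux.gstep P z j) * (PPAux.wstep lam P z j * (μ (B z)).toReal)
          = f z * (μ (B z)).toReal := by
        have := PPAux.drift_zero (lam := lam) (P := P) hP hlam hM hMeven z
        calc ∑ j : Fin M, f (PPAux.gstep P z j) * (PPAux.wstep lam P z j * (μ (B z)).toReal)
            = (∑ j : Fin M, PPAux.wstep lam P z j * PPAux.fval lam (PPAux.gstep P z j))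
              * (μ (B z)).toReal := by
              rw [Finset.sum_mul]; congr 1; ext j; rw [hfdef]; ring
          _ = f z * (μ (B z)).toReal := by rw [this, hfdef]
      have h4 : ∫ ω in B z, f (X n ω) ∂μ = f z * (μ (B z)).toReal := by
        rw [setIntegral_congr_ae (hBm z) (g := fun _ => f z)
          (ae_of_all _ (fun ω hω => by rw [hω.2])), setIntegral_const, smul_eq_mul, mul_comm, measureReal_def]
      rw [h1, h2, h3, h4]
    calc ∫ ω in A, f (X (n+1) ω) ∂μ
        = ∑' z, ∫ ω in B z, f (X (n+1) ω) ∂μ := by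
          conv_lhs => rw [hAU]
          exact integral_iUnion hBm hdisj (hfint (n+1)).integrableOn
      _ = ∑' z, ∫ ω in B z, f (X n ω) ∂μ := tsum_congr key
      _ = ∫ ω in A, f (X n ω) ∂μ := by
          conv_rhs => rw [hAU]
          exact (integral_iUnion hBm hdisj (hfint n).integrableOn).symm
  set τ : Ω → ℕ := fun ω => sInf {n | X n ω = y} with hτdef
  have hτmeas : Measurable τ := by
    apply measurable_to_countable'
    intro k
    rcases Nat.eq_zero_or_pos k with hk | hk
    · subst hk
      have he : τ ⁻¹' {0} = {ω | X 0 ω = y} ∪ ⋂ n, {ω | X n ω = y}ᶜ := by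
        ext ω
        simp only [Set.mem_preimage, Set.mem_singleton_iff, Set.mem_union, Set.mem_iInter,
          Set.mem_compl_iff, Set.mem_setOf_eq, hτdef]
        rw [Nat.sInf_eq_zero]
        constructor
        · rintro (h | h)
          · exact Or.inl h
          · right; intro n hn
            rw [Set.eq_empty_iff_forall_notMem] at h
            exact h n hn
        · rintro (h | h)
          · exact Or.inl h
          · right
            rw [Set.eq_empty_iff_forall_notMem]
            exact fun n hn => h n hn
      rw [he]
      exact (hXsm' 0 y).union (MeasurableSet.iInter fun n => (hXsm' n y).compl)
    · have he : τ ⁻¹' {k} = {ω | X k ω = y} ∩ ⋂ (m : ℕ) (_ : m < k), {ω | X m ω = y}ᶜ := by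
        ext ω
        simp only [Set.mem_preimage, Set.mem_singleton_iff, Set.mem_inter_iff, Set.mem_iInter,
          Set.mem_compl_iff, Set.mem_setOf_eq, hτdef]
        constructor
        · intro h
          have hne : {n | X n ω = y}.Nonempty := by
            by_contra hcn
            rw [Set.not_nonempty_iff_eq_empty] at hcn
            have h0 : sInf {n | X n ω = y} = 0 := by rw [hcn]; exact Nat.sInf_empty
            omega
          refine ⟨?_, ?_⟩
          · have := Nat.sInf_mem hne
            rw [h] at this
            exact this
          · intro m hm
            exact Nat.notMem_of_lt_sInf (by rw [h]; exact hm)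
        · rintro ⟨h1, h2⟩
          apply le_antisymm (Nat.sInf_le h1)
          by_contra hc
          push_neg at hc
          exact h2 _ hc (Nat.sInf_mem (s := {n | X n ω = y}) ⟨k, h1⟩)
      rw [he]
      exact (hXsm' k y).inter (MeasurableSet.iInter fun m =>
        MeasurableSet.iInter fun _ => (hXsm' m y).compl)
  set E : Set Ω := ⋃ n, {ω | X n ω = y} with hEdef
  have hEmeas : MeasurableSet E := MeasurableSet.iUnion fun n => hXsm' n y
  have hhit_mem : ∀ ω ∈ E, X (τ ω) ω = y ∧ hitTime X y ω = (τ ω : ℝ≥0∞) := by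
    intro ω hω
    have hne : {n | X n ω = y}.Nonempty := by
      rw [hEdef] at hω
      obtain ⟨n, hn⟩ := Set.mem_iUnion.mp hω
      exact ⟨n, hn⟩
    have h1 : X (τ ω) ω = y := Nat.sInf_mem hne
    refine ⟨h1, ?_⟩
    unfold hitTime
    apply le_antisymm
    · exact sInf_le ⟨τ ω, h1, rfl⟩
    · apply le_sInf
      rintro t ⟨n, hn, rfl⟩
      exact_mod_cast Nat.cast_le.mpr (Nat.sInf_le hn)
  have hhit_top : ∀ ω, ω ∉ E → hitTime X y ω = ⊤ := by
    intro ω hω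
    unfold hitTime
    have he : {t : ℝ≥0∞ | ∃ n : ℕ, X n ω = y ∧ (n : ℝ≥0∞) = t} = ∅ := by
      rw [Set.eq_empty_iff_forall_notMem]
      rintro t ⟨n, hn, _⟩
      exact hω (Set.mem_iUnion.mpr ⟨n, hn⟩)
    rw [he, sInf_empty]
  by_contra hfin
  have hEc : μ Eᶜ = 0 := by
    by_contra h
    apply hfin
    have h1 : ∫⁻ ω in Eᶜ, hitTime X y ω ∂μ = ⊤ := by
      rw [setLIntegral_congr_fun hEmeas.compl
        (fun ω hω => hhit_top ω hω)]
      simp [ENNReal.top_mul, h]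
    exact top_le_iff.mp (h1 ▸ setLIntegral_le_lintegral Eᶜ _)
  have haeE : ∀ᵐ ω ∂μ, ω ∈ E := by
    filter_upwards [measure_eq_zero_iff_ae_notMem.mp hEc] with ω h
    simpa using h
  have hτint : Integrable (fun ω => (τ ω : ℝ)) μ := by
    constructor
    · exact ((measurable_of_countable _).comp hτmeas).aestronglyMeasurable
    · show (∫⁻ ω, (‖(τ ω : ℝ)‖₊ : ℝ≥0∞) ∂μ) < ⊤
      have hcongr : ∀ᵐ ω ∂μ, (‖(τ ω : ℝ)‖₊ : ℝ≥0∞) = hitTime X y ω := by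
        filter_upwards [haeE] with ω hω
        rw [(hhit_mem ω hω).2]
        simp
      rw [lintegral_congr_ae hcongr]
      exact lt_top_iff_ne_top.mpr hfin
  set Z : ℕ → Ω → ℝ := fun n ω => f (X (min n (τ ω)) ω) with hZdef
  have hZmeas : ∀ n, Measurable (Z n) := by
    intro n
    have hm : Measurable fun ω => min n (τ ω) := (measurable_of_countable _).comp hτmeas
    exact (measurable_of_countable f).comp (PPAux.measurable_comp_nat hXm hm)
  have hZbd : ∀ᵐ ω ∂μ, ∀ n, |Z n ω| ≤ |f x| + c * τ ω := by
    filter_upwards [hbd] with ω h n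
    calc |Z n ω| ≤ |f x| + c * (min n (τ ω) : ℕ) := h _
      _ ≤ |f x| + c * τ ω := by
        have h2 : ((min n (τ ω) : ℕ) : ℝ) ≤ (τ ω : ℝ) := by
          exact_mod_cast Nat.min_le_right n (τ ω)
        have := mul_le_mul_of_nonneg_left h2 hc0
        linarith
  have hZint : ∀ n, Integrable (Z n) μ := by
    intro n
    refine ((integrable_const (|f x|)).add (hτint.const_mul c)).mono'
      (hZmeas n).aestronglyMeasurable ?_
    filter_upwards [hZbd] with ω h
    simpa [Real.norm_eq_abs] using h n
  have hZeq : ∀ n, ∫ ω, Z n ω ∂μ = f x := by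
    intro n
    induction n with
    | zero =>
      have h0 : ∀ᵐ ω ∂μ, Z 0 ω = f x := by
        filter_upwards [hX0] with ω h
        simp only [hZdef, Nat.zero_min, h]
      rw [integral_congr_ae h0, integral_const, probReal_univ]
      simp
    | succ n ih =>
      set A : Set Ω := ⋂ (k : ℕ) (_ : k ≤ n), {ω | X k ω = y}ᶜ with hAdef
      have hAf : MeasurableSet[ℱ n] A :=
        MeasurableSet.iInter fun k => MeasurableSet.iInter fun hk =>
          MeasurableSet.compl (ℱ.mono hk _ (hXsm k y))
      have hdiffae : ∀ᵐ ω ∂μ, Z (n+1) ω - Z n ω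
          = Set.indicator A (fun ω' => f (X (n+1) ω') - f (X n ω')) ω := by
        filter_upwards [haeE] with ω hω
        by_cases hτn : n < τ ω
        · have hA1 : ω ∈ A := by
            simp only [hAdef, Set.mem_iInter, Set.mem_compl_iff, Set.mem_setOf_eq]
            intro k hk hky
            have h1 : τ ω ≤ k := Nat.sInf_le hky
            omega
          rw [Set.indicator_of_mem hA1]
          simp only [hZdef]
          rw [min_eq_left (by omega), min_eq_left (by omega)]
        · have hA1 : ω ∉ A := by
            have h1 := (hhit_mem ω hω).1
            simp only [hAdef, Set.mem_iInter, Set.mem_compl_iff, Set.mem_setOf_eq]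
            push_neg
            exact ⟨τ ω, by omega, h1⟩
          rw [Set.indicator_of_notMem hA1]
          simp only [hZdef]
          rw [min_eq_right (by omega), min_eq_right (by omega)]
          ring
      have h1 : ∫ ω, (Z (n+1) ω - Z n ω) ∂μ = 0 := by
        rw [integral_congr_ae hdiffae, integral_indicator (ℱ.le n A hAf)]
        rw [integral_sub ((hfint (n+1)).integrableOn) ((hfint n).integrableOn)]
        rw [hsint n A hAf]
        ring
      rw [integral_sub (hZint (n+1)) (hZint n)] at h1
      linarith
  have htend : ∀ᵐ ω ∂μ, Filter.Tendsto (fun n => Z n ω) Filter.atTop (nhds (f y)) := by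
    filter_upwards [haeE] with ω hω
    have h1 := (hhit_mem ω hω).1
    apply tendsto_atTop_of_eventually_const (i₀ := τ ω)
    intro n hn
    simp only [hZdef]
    rw [min_eq_right hn, h1]
  have hlim : Filter.Tendsto (fun n => ∫ ω, Z n ω ∂μ) Filter.atTop (nhds (f y)) := by
    have h0 := tendsto_integral_of_dominated_convergence (μ := μ) (F := Z)
      (f := fun _ => f y) (fun ω => |f x| + c * τ ω)
      (fun n => (hZmeas n).aestronglyMeasurable)
      ((integrable_const _).add (hτint.const_mul c)) ?_ htend
    · simpa using h0
    · intro n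
      filter_upwards [hZbd] with ω h
      simpa [Real.norm_eq_abs] using h n
  have hfxy : f x = f y := by
    have h1 : Filter.Tendsto (fun n => ∫ ω, Z n ω ∂μ) Filter.atTop (nhds (f x)) := by
      simp only [hZeq]; exact tendsto_const_nhds
    exact tendsto_nhds_unique h1 hlim
  exact hxy hfxy
end

section
/- For the critical two-server re-entrant line network, the vector α defined by α_k = Σ_{j=0}^{j̄(k)−1} μ_{ī(k),j}^{−1}·(−1)^{σ(ī(k),j)} satisfies Δ̂(i,j)⋅α = (−1)^{σ(i,j)} for every operation (i,j) with 0 ≤ j ≤ n_i. -/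
open MeasureTheory
open scoped ENNReal

/-- `kbar`, `ibar`, `jbar` form a valid indexing of the `M` queues by the operations
`(i, j)` with `1 ≤ j ≤ nᵢ`: `kbar` is a bijection from the set of such operations onto
`Fin M` with inverse components `ibar`, `jbar`. -/
def ReIndex (S M : ℕ) (n : Fin S → ℕ) (kbar : Fin S → ℕ → Fin M)
    (ibar : Fin M → Fin S) (jbar : Fin M → ℕ) : Prop :=
  (∀ (i : Fin S) (j : ℕ), 1 ≤ j → j ≤ n i →
      ibar (kbar i j) = i ∧ jbar (kbar i j) = j) ∧
  (∀ k : Fin M, 1 ≤ jbar k ∧ jbar k ≤ n (ibar k) ∧ kbar (ibar k) (jbar k) = k)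

/-- Criticality: for each stream `i`, the total mean processing time required on server 1
equals that required on server 2, i.e.
`∑_{j ∈ C₁(i)} μᵢⱼ⁻¹ = ∑_{j ∈ C₂(i)} μᵢⱼ⁻¹` where `Cₗ(i) = {j ≤ nᵢ : σ(i,j) = ℓ}`. -/
def ReCritical (S : ℕ) (n : Fin S → ℕ) (mu : Fin S → ℕ → ℝ) (sg : Fin S → ℕ → ℕ) :
    Prop :=
  ∀ i : Fin S,
    ∑ j ∈ (Finset.range (n i + 1)).filter (fun j => sg i j = 1), (mu i j)⁻¹ =
    ∑ j ∈ (Finset.range (n i + 1)).filter (fun j => sg i j = 2), (mu i j)⁻¹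

/-- The vector `Δ̂(i, j) ∈ ℝ^M` of operation `(i, j)`:
`Δ̂(i,0) = μᵢ₀ e_{k̄(i,1)}`, `Δ̂(i,j) = μᵢⱼ (e_{k̄(i,j+1)} - e_{k̄(i,j)})` for
`1 ≤ j ≤ nᵢ - 1`, and `Δ̂(i,nᵢ) = -μᵢₙᵢ e_{k̄(i,nᵢ)}`. -/
noncomputable def reDhat (S M : ℕ) (n : Fin S → ℕ) (mu : Fin S → ℕ → ℝ)
    (kbar : Fin S → ℕ → Fin M) (i : Fin S) (j : ℕ) : Fin M → ℝ :=
  fun k =>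
    if j = 0 then (if k = kbar i 1 then mu i 0 else 0)
    else if j = n i then (if k = kbar i (n i) then -mu i (n i) else 0)
    else (if k = kbar i (j + 1) then mu i j else 0) +
         (if k = kbar i j then -mu i j else 0)

/-- The vector `α ∈ ℝ^M` with entries
`α_k = ∑_{j=0}^{j̄(k)-1} μ_{ī(k),j}⁻¹ (-1)^{σ(ī(k),j)}`. -/
noncomputable def reAlpha (S M : ℕ) (mu : Fin S → ℕ → ℝ) (sg : Fin S → ℕ → ℕ)
    (ibar : Fin M → Fin S) (jbar : Fin M → ℕ) : Fin M → ℝ :=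
  fun k => ∑ j ∈ Finset.range (jbar k), (mu (ibar k) j)⁻¹ * (-1 : ℝ) ^ sg (ibar k) j


private lemma sum_ite_mul' {M : ℕ} (a : Fin M) (c : ℝ) (f : Fin M → ℝ) :
    ∑ k : Fin M, (if k = a then c else 0) * f k = c * f a := by
  rw [Finset.sum_eq_single a]
  · simp
  · intro b _ hb; simp [hb]
  · intro h; exact absurd (Finset.mem_univ a) h

/-- For the critical two-server re-entrant line network, the vector `α` satisfies
`Δ̂(i,j) ⬝ α = (-1)^{σ(i,j)}` for every operation `(i, j)` with `0 ≤ j ≤ nᵢ`. -/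
theorem reentrant_Dhat_dot_alpha (S M : ℕ) (hS : 1 ≤ S)
    (n : Fin S → ℕ) (hn : ∀ i, 1 ≤ n i)
    (mu : Fin S → ℕ → ℝ) (hmu : ∀ (i : Fin S) (j : ℕ), j ≤ n i → 0 < mu i j)
    (sg : Fin S → ℕ → ℕ) (hsg : ∀ (i : Fin S) (j : ℕ), j ≤ n i → sg i j = 1 ∨ sg i j = 2)
    (hM : M = ∑ i, n i)
    (kbar : Fin S → ℕ → Fin M) (ibar : Fin M → Fin S) (jbar : Fin M → ℕ)
    (hidx : ReIndex S M n kbar ibar jbar)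
    (hcrit : ReCritical S n mu sg)
    (i : Fin S) (j : ℕ) (hj : j ≤ n i) :
    ∑ k : Fin M, reDhat S M n mu kbar i j k * reAlpha S M mu sg ibar jbar k
      = (-1 : ℝ) ^ sg i j := by
  obtain ⟨hfw, _⟩ := hidx
  have halpha : ∀ j' : ℕ, 1 ≤ j' → j' ≤ n i →
      reAlpha S M mu sg ibar jbar (kbar i j') =
        ∑ l ∈ Finset.range j', (mu i l)⁻¹ * (-1 : ℝ) ^ sg i l := by
    intro j' h1 h2
    obtain ⟨hi, hj'⟩ := hfw i j' h1 h2
    simp [reAlpha, hi, hj']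
  have hcrit0 : ∑ l ∈ Finset.range (n i + 1), (mu i l)⁻¹ * (-1 : ℝ) ^ sg i l = 0 := by
    have hsplit := Finset.sum_filter_add_sum_filter_not (Finset.range (n i + 1))
      (fun l => sg i l = 1) (fun l => (mu i l)⁻¹ * (-1 : ℝ) ^ sg i l)
    have h1 : ∑ l ∈ (Finset.range (n i + 1)).filter (fun l => sg i l = 1),
        (mu i l)⁻¹ * (-1 : ℝ) ^ sg i l
        = -∑ l ∈ (Finset.range (n i + 1)).filter (fun l => sg i l = 1), (mu i l)⁻¹ := by
      rw [← Finset.sum_neg_distrib]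
      refine Finset.sum_congr rfl ?_
      intro l hl
      rw [Finset.mem_filter] at hl
      rw [hl.2]; ring
    have h2 : ∑ l ∈ (Finset.range (n i + 1)).filter (fun l => ¬ sg i l = 1),
        (mu i l)⁻¹ * (-1 : ℝ) ^ sg i l
        = ∑ l ∈ (Finset.range (n i + 1)).filter (fun l => sg i l = 2), (mu i l)⁻¹ := by
      have hset : (Finset.range (n i + 1)).filter (fun l => ¬ sg i l = 1)
          = (Finset.range (n i + 1)).filter (fun l => sg i l = 2) := by
        refine Finset.filter_congr ?_
        intro l hl
        rw [Finset.mem_range] at hl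
        rcases hsg i l (Nat.lt_succ_iff.mp hl) with h | h <;> simp [h]
      rw [hset]
      refine Finset.sum_congr rfl ?_
      intro l hl
      rw [Finset.mem_filter] at hl
      rw [hl.2]; ring
    rw [h1, h2] at hsplit
    rw [← hsplit, hcrit i]; ring
  have hmune : ∀ l ≤ n i, mu i l ≠ 0 := fun l hl => ne_of_gt (hmu i l hl)
  rcases Nat.eq_zero_or_pos j with hj0 | hjpos
  · subst hj0
    simp only [reDhat, if_pos rfl, if_true]
    rw [sum_ite_mul', halpha 1 le_rfl (hn i)]
    rw [Finset.sum_range_one, ← mul_assoc, mul_inv_cancel₀ (hmune 0 (Nat.zero_le _)), one_mul]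
  · rcases eq_or_ne j (n i) with hjn | hjn
    · subst hjn

      simp only [reDhat, if_neg hjpos.ne', if_pos rfl, if_true]
      rw [sum_ite_mul', halpha (n i) (hn i) le_rfl]
      have := hcrit0
      rw [Finset.sum_range_succ] at this
      have hS : ∑ l ∈ Finset.range (n i), (mu i l)⁻¹ * (-1 : ℝ) ^ sg i l
          = -((mu i (n i))⁻¹ * (-1 : ℝ) ^ sg i (n i)) := by linarith
      rw [hS, neg_mul_neg, ← mul_assoc, mul_inv_cancel₀ (hmune _ le_rfl), one_mul]
    · have hjlt : j < n i := lt_of_le_of_ne hj hjn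
      simp only [reDhat, if_neg hjpos.ne', if_neg hjn]
      rw [Finset.sum_congr rfl (fun k _ => add_mul _ _ _), Finset.sum_add_distrib,
        sum_ite_mul', sum_ite_mul', halpha (j+1) (Nat.le_add_left 1 j) hjlt,
        halpha j hjpos hj, Finset.sum_range_succ]
      have h := hmune j hj
      field_simp [h]
      ring
end

section
/- For the critical two-server re-entrant line network, the vector α defined by α_k = Σ_{j=0}^{j̄(k)−1} μ_{ī(k),j}^{−1}·(−1)^{σ(ī(k),j)} is orthogonal to every row of the action drift matrix: for every pair of operations (i₁,j₁), (i₂,j₂) with σ(i₁,j₁) = 1 and σ(i₂,j₂) = 2, one has α⋅(Δ̂(i₁,j₁) + Δ̂(i₂,j₂)) = 0; in particular D·α = 0, where D is the matrix whose rows are the normalized vectors (Δ̂(i₁,j₁)+Δ̂(i₂,j₂))/‖Δ̂(i₁,j₁)+Δ̂(i₂,j₂)‖₁ over all such pairs. -/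
open MeasureTheory
open scoped ENNReal

lemma re_key (S M : ℕ) (n : Fin S → ℕ) (hn : ∀ i, 1 ≤ n i)
    (mu : Fin S → ℕ → ℝ) (hmu : ∀ (i : Fin S) (j : ℕ), j ≤ n i → 0 < mu i j)
    (sg : Fin S → ℕ → ℕ) (hsg : ∀ (i : Fin S) (j : ℕ), j ≤ n i → sg i j = 1 ∨ sg i j = 2)
    (kbar : Fin S → ℕ → Fin M) (ibar : Fin M → Fin S) (jbar : Fin M → ℕ)
    (hidx : ReIndex S M n kbar ibar jbar) (hcrit : ReCritical S n mu sg)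
    (i : Fin S) (j : ℕ) (hj : j ≤ n i) :
    ∑ k : Fin M, reAlpha S M mu sg ibar jbar k * reDhat S M n mu kbar i j k
      = (-1 : ℝ) ^ sg i j := by
  have hA : ∀ j', 1 ≤ j' → j' ≤ n i →
      reAlpha S M mu sg ibar jbar (kbar i j') =
        ∑ l ∈ Finset.range j', (mu i l)⁻¹ * (-1 : ℝ) ^ sg i l := by
    intro j' h1 h2
    obtain ⟨hi, hjb⟩ := hidx.1 i j' h1 h2
    simp [reAlpha, hi, hjb]
  have hmune : ∀ j', j' ≤ n i → mu i j' ≠ 0 := fun j' h => (hmu i j' h).ne'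
  -- total alternating sum is zero
  have htot : ∑ l ∈ Finset.range (n i + 1), (mu i l)⁻¹ * (-1 : ℝ) ^ sg i l = 0 := by
    have h := hcrit i
    rw [← Finset.sum_filter_add_sum_filter_not (Finset.range (n i + 1))
      (fun l => sg i l = 1)]
    have e1 : ∑ l ∈ (Finset.range (n i + 1)).filter (fun l => sg i l = 1),
        (mu i l)⁻¹ * (-1 : ℝ) ^ sg i l
        = -∑ l ∈ (Finset.range (n i + 1)).filter (fun l => sg i l = 1), (mu i l)⁻¹ := by
      rw [← Finset.sum_neg_distrib]
      refine Finset.sum_congr rfl fun l hl => ?_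
      simp only [Finset.mem_filter] at hl
      rw [hl.2]; ring
    have hflt : (Finset.range (n i + 1)).filter (fun l => ¬ sg i l = 1)
        = (Finset.range (n i + 1)).filter (fun l => sg i l = 2) := by
      apply Finset.filter_congr
      intro l hl
      simp only [Finset.mem_range] at hl
      rcases hsg i l (Nat.lt_succ_iff.mp hl) with h' | h' <;> simp [h']
    have e2 : ∑ l ∈ (Finset.range (n i + 1)).filter (fun l => ¬ sg i l = 1),
        (mu i l)⁻¹ * (-1 : ℝ) ^ sg i l
        = ∑ l ∈ (Finset.range (n i + 1)).filter (fun l => sg i l = 2), (mu i l)⁻¹ := by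
      rw [hflt]
      refine Finset.sum_congr rfl fun l hl => ?_
      simp only [Finset.mem_filter] at hl
      rw [hl.2]; ring
    rw [e1, e2, h]; ring
  rcases eq_or_ne j 0 with rfl | h0
  · have hΔ : ∀ k, reDhat S M n mu kbar i 0 k = if k = kbar i 1 then mu i 0 else 0 := by
      intro k; simp [reDhat]
    simp only [hΔ, mul_ite, mul_zero, Finset.sum_ite_eq', Finset.mem_univ, if_true]
    rw [hA 1 le_rfl (hn i), Finset.sum_range_one]
    rw [mul_comm]; rw [← mul_assoc, mul_inv_cancel₀ (hmune 0 hj), one_mul]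
  rcases eq_or_ne j (n i) with rfl | hne
  · have hΔ : ∀ k, reDhat S M n mu kbar i (n i) k =
        if k = kbar i (n i) then -mu i (n i) else 0 := by
      intro k; simp [reDhat, h0]
    simp only [hΔ, mul_ite, mul_zero, Finset.sum_ite_eq', Finset.mem_univ, if_true]
    rw [hA (n i) (hn i) le_rfl]
    have := Finset.sum_range_succ (fun l => (mu i l)⁻¹ * (-1 : ℝ) ^ sg i l) (n i)
    rw [htot] at this
    have h2 : ∑ l ∈ Finset.range (n i), (mu i l)⁻¹ * (-1 : ℝ) ^ sg i l
        = -((mu i (n i))⁻¹ * (-1 : ℝ) ^ sg i (n i)) := by linarith [this]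
    rw [h2]
    field_simp [hmune (n i) le_rfl]
  · -- middle case: 1 ≤ j ≤ n i - 1
    have h1 : 1 ≤ j := Nat.one_le_iff_ne_zero.mpr h0
    have hjlt : j < n i := lt_of_le_of_ne hj hne
    have hΔ : ∀ k, reDhat S M n mu kbar i j k =
        (if k = kbar i (j + 1) then mu i j else 0) +
        (if k = kbar i j then -mu i j else 0) := by
      intro k; simp [reDhat, h0, hne]
    simp only [hΔ, mul_add, Finset.sum_add_distrib, mul_ite, mul_zero,
      Finset.sum_ite_eq', Finset.mem_univ, if_true]
    rw [hA (j + 1) (by omega) (by omega), hA j h1 (by omega),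
      Finset.sum_range_succ]
    have := hmune j hj
    field_simp
    ring

/-- For the critical two-server re-entrant line network, the vector `α` is orthogonal to
every row of the action drift matrix: for every pair of operations `(i₁,j₁)`, `(i₂,j₂)`
with `σ(i₁,j₁) = 1` and `σ(i₂,j₂) = 2` one has `α ⬝ (Δ̂(i₁,j₁) + Δ̂(i₂,j₂)) = 0`; in
particular `D α = 0` where the rows of `D` are the normalized vectors
`(Δ̂(i₁,j₁) + Δ̂(i₂,j₂)) / ‖Δ̂(i₁,j₁) + Δ̂(i₂,j₂)‖₁`. -/
theorem reentrant_alpha_orthogonal (S M : ℕ) (hS : 1 ≤ S)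
    (n : Fin S → ℕ) (hn : ∀ i, 1 ≤ n i)
    (mu : Fin S → ℕ → ℝ) (hmu : ∀ (i : Fin S) (j : ℕ), j ≤ n i → 0 < mu i j)
    (sg : Fin S → ℕ → ℕ) (hsg : ∀ (i : Fin S) (j : ℕ), j ≤ n i → sg i j = 1 ∨ sg i j = 2)
    (hM : M = ∑ i, n i)
    (kbar : Fin S → ℕ → Fin M) (ibar : Fin M → Fin S) (jbar : Fin M → ℕ)
    (hidx : ReIndex S M n kbar ibar jbar)
    (hcrit : ReCritical S n mu sg)
    (hserv1 : ∃ (i : Fin S) (j : ℕ), j ≤ n i ∧ sg i j = 1)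
    (hserv2 : ∃ (i : Fin S) (j : ℕ), j ≤ n i ∧ sg i j = 2)
    (i1 : Fin S) (j1 : ℕ) (hj1 : j1 ≤ n i1) (hsg1 : sg i1 j1 = 1)
    (i2 : Fin S) (j2 : ℕ) (hj2 : j2 ≤ n i2) (hsg2 : sg i2 j2 = 2) :
    (∑ k : Fin M, reAlpha S M mu sg ibar jbar k *
        (reDhat S M n mu kbar i1 j1 k + reDhat S M n mu kbar i2 j2 k) = 0) ∧
    (∑ k : Fin M, reAlpha S M mu sg ibar jbar k *
        ((reDhat S M n mu kbar i1 j1 k + reDhat S M n mu kbar i2 j2 k) /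
          (∑ k' : Fin M,
            |reDhat S M n mu kbar i1 j1 k' + reDhat S M n mu kbar i2 j2 k'|)) = 0) := by
  have h1 := re_key S M n hn mu hmu sg hsg kbar ibar jbar hidx hcrit i1 j1 hj1
  have h2 := re_key S M n hn mu hmu sg hsg kbar ibar jbar hidx hcrit i2 j2 hj2
  have hsum : ∑ k : Fin M, reAlpha S M mu sg ibar jbar k *
      (reDhat S M n mu kbar i1 j1 k + reDhat S M n mu kbar i2 j2 k) = 0 := by
    simp only [mul_add, Finset.sum_add_distrib, h1, h2, hsg1, hsg2]
    norm_num
  refine ⟨hsum, ?_⟩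
  simp only [div_eq_mul_inv, ← mul_assoc, ← Finset.sum_mul, hsum, zero_mul]
end
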